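/- Let (D_cf, C_cf) be any cut-free cycle-normal CLKID^ω_a proof of the sequent Add2(x,y,z) ⊢ Add1(x,y,z). Then every sequent occurring in an index path of the tree-unfolding of (D_cf, C_cf) is an index sequent. -/

import Mathlib

namespace CLKID

/-- Terms of the language: variables, the constant `0`, and the unary function `s`. -/
inductive Tm : Type where
  | var : ℕ → Tm
  | zero : Tm
  | s : Tm → Tm
deriving DecidableEq

/-- `sIter n t` is the term `s^n t`. -/
def sIter : ℕ → Tm → Tm
  | 0, t => t
  | n + 1, t => Tm.s (sIter n t)

/-- Substitution on terms. -/
def Tm.subst (θ : ℕ → Tm) : Tm → Tm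
  | .var x => θ x
  | .zero => .zero
  | .s t => .s (t.subst θ)

/-- Free variables of a term. -/
def Tm.fv : Tm → Set ℕ
  | .var x => {x}
  | .zero => ∅
  | .s t => t.fv

/-- Subterms of a term. -/
def Tm.sub : Tm → Set Tm
  | .var x => {Tm.var x}
  | .zero => {Tm.zero}
  | .s t => insert (Tm.s t) t.sub

/-- The variable of a term (`none` if the term is of the form `s^n 0`). -/
def Tm.varOf : Tm → Option ℕ
  | .var x => some x
  | .zero => none
  | .s t => t.varOf

/-- Formulas: equations, the two inductive-predicate atoms `Add1`/`Add2`,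
    and the usual first-order connectives and quantifiers. -/
inductive Fm : Type where
  | eq : Tm → Tm → Fm
  | add1 : Tm → Tm → Tm → Fm
  | add2 : Tm → Tm → Tm → Fm
  | not : Fm → Fm
  | and : Fm → Fm → Fm
  | or : Fm → Fm → Fm
  | imp : Fm → Fm → Fm
  | all : ℕ → Fm → Fm
  | ex : ℕ → Fm → Fm
deriving DecidableEq

/-- Substitution on formulas. -/
def Fm.subst (θ : ℕ → Tm) : Fm → Fm
  | .eq t u => .eq (t.subst θ) (u.subst θ)
  | .add1 a b c => .add1 (a.subst θ) (b.subst θ) (c.subst θ)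
  | .add2 a b c => .add2 (a.subst θ) (b.subst θ) (c.subst θ)
  | .not φ => .not (φ.subst θ)
  | .and φ ψ => .and (φ.subst θ) (ψ.subst θ)
  | .or φ ψ => .or (φ.subst θ) (ψ.subst θ)
  | .imp φ ψ => .imp (φ.subst θ) (ψ.subst θ)
  | .all x φ => .all x (φ.subst (Function.update θ x (Tm.var x)))
  | .ex x φ => .ex x (φ.subst (Function.update θ x (Tm.var x)))

/-- Free variables of a formula. -/
def Fm.fv : Fm → Set ℕ
  | .eq t u => t.fv ∪ u.fv
  | .add1 a b c => a.fv ∪ b.fv ∪ c.fv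
  | .add2 a b c => a.fv ∪ b.fv ∪ c.fv
  | .not φ => φ.fv
  | .and φ ψ => φ.fv ∪ ψ.fv
  | .or φ ψ => φ.fv ∪ ψ.fv
  | .imp φ ψ => φ.fv ∪ ψ.fv
  | .all x φ => φ.fv \ {x}
  | .ex x φ => φ.fv \ {x}

/-- Terms occurring in a formula. -/
def Fm.tms : Fm → Set Tm
  | .eq t u => t.sub ∪ u.sub
  | .add1 a b c => a.sub ∪ b.sub ∪ c.sub
  | .add2 a b c => a.sub ∪ b.sub ∪ c.sub
  | .not φ => φ.tms
  | .and φ ψ => φ.tms ∪ ψ.tms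
  | .or φ ψ => φ.tms ∪ ψ.tms
  | .imp φ ψ => φ.tms ∪ ψ.tms
  | .all _ φ => φ.tms
  | .ex _ φ => φ.tms

/-- The substitution `[x := t]`. -/
def sub1 (x : ℕ) (t : Tm) : ℕ → Tm := fun y => if y = x then t else Tm.var y

/-- The simultaneous substitution `[v1 := t, v2 := u]`. -/
def sub2 (v1 v2 : ℕ) (t u : Tm) : ℕ → Tm :=
  fun z => if z = v1 then t else if z = v2 then u else Tm.var z

/-- `≡_Γ`: the smallest congruence relation on terms containing all pairs `(t, u)`
    with the equation `t = u` in `Γ`. -/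
inductive EqvTm (Γ : Set Fm) : Tm → Tm → Prop where
  | base {t u : Tm} : Fm.eq t u ∈ Γ → EqvTm Γ t u
  | refl (t : Tm) : EqvTm Γ t t
  | symm {t u : Tm} : EqvTm Γ t u → EqvTm Γ u t
  | trans {t u v : Tm} : EqvTm Γ t u → EqvTm Γ u v → EqvTm Γ t v
  | sCongr {t u : Tm} : EqvTm Γ t u → EqvTm Γ (Tm.s t) (Tm.s u)

/-- `t ~_Γ u` : `s^n t ≡_Γ s^m u` for some naturals `n`, `m`. -/
def DepTm (Γ : Set Fm) (t u : Tm) : Prop := ∃ n m : ℕ, EqvTm Γ (sIter n t) (sIter m u)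

/-- A sequent: a pair of finite sets of formulas. -/
structure Seq where
  ant : Finset Fm
  suc : Finset Fm

/-- The antecedent of a sequent, as a set of formulas. -/
def antSet (S : Seq) : Set Fm := ↑S.ant

/-- `[Γ]` from Lemma on chains: `{ s^n t1 = s^n t2 | t1 = t2 ∈ Γ or t2 = t1 ∈ Γ }`. -/
def brkt (Γ : Set Fm) : Set Fm :=
  {φ | ∃ (n : ℕ) (t1 t2 : Tm), φ = Fm.eq (sIter n t1) (sIter n t2) ∧
        (Fm.eq t1 t2 ∈ Γ ∨ Fm.eq t2 t1 ∈ Γ)}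

/-- `B1(Γ ⊢ Δ)` : second arguments of `Add1` atoms in the consequent. -/
def B1 (S : Seq) : Set Tm := {b | ∃ a c, Fm.add1 a b c ∈ S.suc}

/-- `C(Γ ⊢ Δ)` : third arguments of `Add2` atoms in the antecedent
    or `Add1` atoms in the consequent. -/
def Cset (S : Seq) : Set Tm :=
  {c | (∃ a b, Fm.add2 a b c ∈ S.ant) ∨ (∃ a b, Fm.add1 a b c ∈ S.suc)}

/-- Index sequent. -/
def IndexSequent (S : Seq) : Prop :=
  (∀ t ∈ B1 S, ∀ u ∈ Cset S, ¬ DepTm (antSet S) t u) ∧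
  (∀ b ∈ B1 S, ∀ b' ∈ B1 S, ∀ n m : ℕ, EqvTm (antSet S) (sIter n b) (sIter m b') → n = m)

/-! ## The cyclic proof systems `CLKID^ω` and `CLKID^ω_a` -/

/-- Rule labels; each label carries the instance data needed to describe the
    rule application (principal formulas, substitutions, case variables, ...).
    `bud` labels bud leaves of cyclic derivation trees. -/
inductive Rule : Type where
  | ax
  | weak
  | cut (φ : Fm)
  | subst (θ : ℕ → Tm)
  | negL (φ : Fm)
  | negR (φ : Fm)
  | andL (φ ψ : Fm)
  | andR (φ ψ : Fm)
  | orL (φ ψ : Fm)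
  | orR (φ ψ : Fm)
  | impL (φ ψ : Fm)
  | impR (φ ψ : Fm)
  | allL (x : ℕ) (t : Tm) (φ : Fm)
  | allR (x : ℕ) (φ : Fm)
  | exL (x : ℕ) (φ : Fm)
  | exR (x : ℕ) (t : Tm) (φ : Fm)
  | eqR (t : Tm)
  | eqL (v1 v2 : ℕ) (t u : Tm)
  | eqLa (v1 v2 : ℕ) (t u : Tm)
  | add1R1
  | add1R2 (a b c : Tm)
  | add2R1
  | add2R2 (a b c : Tm)
  | caseAdd1 (a b c : Tm) (x y z : ℕ)
  | caseAdd2 (a b c : Tm) (x y z : ℕ)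
  | bud

/-- `Inf r S L` : the sequent `S` follows from the list of premises `L`
    by the rule (instance) `r`. -/
inductive Inf : Rule → Seq → List Seq → Prop where
  | ax {Γ Δ : Finset Fm} :
      (Γ ∩ Δ).Nonempty → Inf .ax ⟨Γ, Δ⟩ []
  | weak {Γ Δ Γ' Δ' : Finset Fm} :
      Γ' ⊆ Γ → Δ' ⊆ Δ → Inf .weak ⟨Γ, Δ⟩ [⟨Γ', Δ'⟩]
  | cut {Γ Δ : Finset Fm} {φ : Fm} :
      Inf (.cut φ) ⟨Γ, Δ⟩ [⟨Γ, insert φ Δ⟩, ⟨insert φ Γ, Δ⟩]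
  | subst {Γ Δ : Finset Fm} {θ : ℕ → Tm} :
      Inf (.subst θ) ⟨Γ.image (Fm.subst θ), Δ.image (Fm.subst θ)⟩ [⟨Γ, Δ⟩]
  | negL {Γ Δ : Finset Fm} {φ : Fm} :
      Inf (.negL φ) ⟨insert (.not φ) Γ, Δ⟩ [⟨Γ, insert φ Δ⟩]
  | negR {Γ Δ : Finset Fm} {φ : Fm} :
      Inf (.negR φ) ⟨Γ, insert (.not φ) Δ⟩ [⟨insert φ Γ, Δ⟩]
  | andL {Γ Δ : Finset Fm} {φ ψ : Fm} :
      Inf (.andL φ ψ) ⟨insert (.and φ ψ) Γ, Δ⟩ [⟨insert φ (insert ψ Γ), Δ⟩]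
  | andR {Γ Δ : Finset Fm} {φ ψ : Fm} :
      Inf (.andR φ ψ) ⟨Γ, insert (.and φ ψ) Δ⟩ [⟨Γ, insert φ Δ⟩, ⟨Γ, insert ψ Δ⟩]
  | orL {Γ Δ : Finset Fm} {φ ψ : Fm} :
      Inf (.orL φ ψ) ⟨insert (.or φ ψ) Γ, Δ⟩ [⟨insert φ Γ, Δ⟩, ⟨insert ψ Γ, Δ⟩]
  | orR {Γ Δ : Finset Fm} {φ ψ : Fm} :
      Inf (.orR φ ψ) ⟨Γ, insert (.or φ ψ) Δ⟩ [⟨Γ, insert φ (insert ψ Δ)⟩]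
  | impL {Γ Δ : Finset Fm} {φ ψ : Fm} :
      Inf (.impL φ ψ) ⟨insert (.imp φ ψ) Γ, Δ⟩ [⟨Γ, insert φ Δ⟩, ⟨insert ψ Γ, Δ⟩]
  | impR {Γ Δ : Finset Fm} {φ ψ : Fm} :
      Inf (.impR φ ψ) ⟨Γ, insert (.imp φ ψ) Δ⟩ [⟨insert φ Γ, insert ψ Δ⟩]
  | allL {Γ Δ : Finset Fm} {x : ℕ} {t : Tm} {φ : Fm} :
      Inf (.allL x t φ) ⟨insert (.all x φ) Γ, Δ⟩ [⟨insert (φ.subst (sub1 x t)) Γ, Δ⟩]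
  | allR {Γ Δ : Finset Fm} {x : ℕ} {φ : Fm} :
      (∀ ψ ∈ Γ ∪ Δ, x ∉ Fm.fv ψ) →
      Inf (.allR x φ) ⟨Γ, insert (.all x φ) Δ⟩ [⟨Γ, insert φ Δ⟩]
  | exL {Γ Δ : Finset Fm} {x : ℕ} {φ : Fm} :
      (∀ ψ ∈ Γ ∪ Δ, x ∉ Fm.fv ψ) →
      Inf (.exL x φ) ⟨insert (.ex x φ) Γ, Δ⟩ [⟨insert φ Γ, Δ⟩]
  | exR {Γ Δ : Finset Fm} {x : ℕ} {t : Tm} {φ : Fm} :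
      Inf (.exR x t φ) ⟨Γ, insert (.ex x φ) Δ⟩ [⟨Γ, insert (φ.subst (sub1 x t)) Δ⟩]
  | eqR {Γ Δ : Finset Fm} {t : Tm} :
      Inf (.eqR t) ⟨Γ, insert (.eq t t) Δ⟩ []
  | eqL {Γ Δ : Finset Fm} {v1 v2 : ℕ} {t u : Tm} :
      Inf (.eqL v1 v2 t u)
        ⟨insert (.eq t u) (Γ.image (Fm.subst (sub2 v1 v2 t u))),
          Δ.image (Fm.subst (sub2 v1 v2 t u))⟩
        [⟨Γ.image (Fm.subst (sub2 v1 v2 u t)), Δ.image (Fm.subst (sub2 v1 v2 u t))⟩]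
  | eqLa {Γ Δ : Finset Fm} {v1 v2 : ℕ} {t u : Tm} :
      Inf (.eqLa v1 v2 t u)
        ⟨insert (.eq t u) (Γ.image (Fm.subst (sub2 v1 v2 t u))),
          Δ.image (Fm.subst (sub2 v1 v2 t u))⟩
        [⟨insert (.eq t u) (Γ.image (Fm.subst (sub2 v1 v2 u t))),
          Δ.image (Fm.subst (sub2 v1 v2 u t))⟩]
  | add1R1 {Γ Δ : Finset Fm} {b : Tm} :
      Inf .add1R1 ⟨Γ, insert (.add1 .zero b b) Δ⟩ []
  | add1R2 {Γ Δ : Finset Fm} {a b c : Tm} :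
      Inf (.add1R2 a b c) ⟨Γ, insert (.add1 (.s a) b (.s c)) Δ⟩ [⟨Γ, insert (.add1 a b c) Δ⟩]
  | add2R1 {Γ Δ : Finset Fm} {b : Tm} :
      Inf .add2R1 ⟨Γ, insert (.add2 .zero b b) Δ⟩ []
  | add2R2 {Γ Δ : Finset Fm} {a b c : Tm} :
      Inf (.add2R2 a b c) ⟨Γ, insert (.add2 (.s a) b c) Δ⟩ [⟨Γ, insert (.add2 a (.s b) c) Δ⟩]
  | caseAdd1 {Γ Δ : Finset Fm} {a b c : Tm} {x y z : ℕ} :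
      x ≠ y → x ≠ z → y ≠ z →
      (∀ ψ ∈ insert (Fm.add1 a b c) (Γ ∪ Δ), x ∉ Fm.fv ψ ∧ y ∉ Fm.fv ψ ∧ z ∉ Fm.fv ψ) →
      Inf (.caseAdd1 a b c x y z) ⟨insert (.add1 a b c) Γ, Δ⟩
        [⟨insert (.eq a .zero) (insert (.eq b (.var y)) (insert (.eq c (.var y)) Γ)), Δ⟩,
         ⟨insert (.eq a (.s (.var x))) (insert (.eq b (.var y)) (insert (.eq c (.s (.var z)))
            (insert (.add1 (.var x) (.var y) (.var z)) Γ))), Δ⟩]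
  | caseAdd2 {Γ Δ : Finset Fm} {a b c : Tm} {x y z : ℕ} :
      x ≠ y → x ≠ z → y ≠ z →
      (∀ ψ ∈ insert (Fm.add2 a b c) (Γ ∪ Δ), x ∉ Fm.fv ψ ∧ y ∉ Fm.fv ψ ∧ z ∉ Fm.fv ψ) →
      Inf (.caseAdd2 a b c x y z) ⟨insert (.add2 a b c) Γ, Δ⟩
        [⟨insert (.eq a .zero) (insert (.eq b (.var y)) (insert (.eq c (.var y)) Γ)), Δ⟩,
         ⟨insert (.eq a (.s (.var x))) (insert (.eq b (.var y)) (insert (.eq c (.var z))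
            (insert (.add2 (.var x) (.s (.var y)) (.var z)) Γ))), Δ⟩]

/-- A labeling of tree nodes (finite sequences of naturals) by sequents and rules;
    `none` means the node is not in the tree. -/
abbrev Lbl : Type := List ℕ → Option (Seq × Rule)

/-- The children of `σ` are labeled exactly by the premise list `prems`. -/
def childrenOK (f : Lbl) (σ : List ℕ) (prems : List Seq) : Prop :=
  (∀ i : Fin prems.length, ∃ r', f (σ ++ [(i : ℕ)]) = some (prems.get i, r')) ∧
  (∀ i : ℕ, prems.length ≤ i → f (σ ++ [i]) = none)

/-- Derivation trees (possibly infinite): prefix-closed domain, each non-bud node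
    is the conclusion of a rule whose premises label its children, buds are leaves. -/
structure DTree where
  label : Lbl
  root_def : label [] ≠ none
  prefix_closed : ∀ σ τ : List ℕ, label (σ ++ τ) ≠ none → label σ ≠ none
  wf : ∀ σ S r, label σ = some (S, r) →
    (r = Rule.bud ∧ ∀ i : ℕ, label (σ ++ [i]) = none) ∨
    (r ≠ Rule.bud ∧ ∃ prems, Inf r S prems ∧ childrenOK label σ prems)

/-- `σ` is a bud of the labeling `f`. -/
def budAt (f : Lbl) (σ : List ℕ) : Prop := ∃ S, f σ = some (S, Rule.bud)

/-- `σ` is an inner node of `f` labeled with the sequent `S`. -/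
def innerWith (f : Lbl) (σ : List ℕ) (S : Seq) : Prop :=
  ∃ r, f σ = some (S, r) ∧ r ≠ Rule.bud

/-- A pre-proof: a finite derivation tree together with a function assigning to
    each bud a companion, i.e. an inner node labeled with the same sequent. -/
structure PreProof where
  D : DTree
  fin : {σ : List ℕ | D.label σ ≠ none}.Finite
  C : List ℕ → List ℕ
  comp : ∀ σ S, D.label σ = some (S, Rule.bud) → innerWith D.label (C σ) S

/-- Cycle-normality: every companion is an ancestor of its bud. -/
def PreProof.CycleNormal (P : PreProof) : Prop :=
  ∀ σ S, P.D.label σ = some (S, Rule.bud) → P.C σ <+: σ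

/-- `T` is the tree-unfolding of the pre-proof `P`: it agrees with `P.D` on
    non-bud nodes, below a bud it continues as below the bud's companion, and it
    is empty on nodes not in `P.D` having no bud prefix. -/
def IsUnfolding (P : PreProof) (T : Lbl) : Prop :=
  (∀ σ, P.D.label σ ≠ none → ¬ budAt P.D.label σ → T σ = P.D.label σ) ∧
  (∀ σ₁ σ₂ : List ℕ, budAt P.D.label σ₁ → T (σ₁ ++ σ₂) = T (P.C σ₁ ++ σ₂)) ∧
  (∀ σ, P.D.label σ = none → (∀ σ₁, σ₁ <+: σ → ¬ budAt P.D.label σ₁) → T σ = none)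

/-- An infinite path in the labeling `f`. -/
def IsInfPath (f : Lbl) (p : ℕ → List ℕ) : Prop :=
  (∀ i, f (p i) ≠ none) ∧ (∀ i, ∃ n : ℕ, p (i + 1) = p i ++ [n])

/-- Atomic formulas with an inductive predicate. -/
def isIndAtom (φ : Fm) : Prop :=
  (∃ a b c, φ = Fm.add1 a b c) ∨ (∃ a b c, φ = Fm.add2 a b c)

/-- A progressing trace step: the traced formula is the principal formula of a
    case rule and its successor (in the corresponding case distinction, child `j`)
    is a case-descendant. -/
def progStep : Rule → ℕ → Fm → Fm → Prop := fun r j τ τ' =>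
  match r with
  | .caseAdd1 a b c x y z =>
      τ = Fm.add1 a b c ∧ j = 1 ∧ τ' = Fm.add1 (.var x) (.var y) (.var z)
  | .caseAdd2 a b c x y z =>
      τ = Fm.add2 a b c ∧ j = 1 ∧ τ' = Fm.add2 (.var x) (.s (.var y)) (.var z)
  | _ => False

/-- The trace connection relation between the traced formula at a conclusion of a
    rule `r` and the traced formula at its `j`-th premise. -/
def connStep : Rule → ℕ → Fm → Fm → Prop := fun r j τ τ' =>
  match r with
  | .subst θ => τ = Fm.subst θ τ'
  | .eqL v1 v2 t u =>
      ∃ F : Fm, τ = Fm.subst (sub2 v1 v2 t u) F ∧ τ' = Fm.subst (sub2 v1 v2 u t) F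
  | .eqLa v1 v2 t u =>
      ∃ F : Fm, τ = Fm.subst (sub2 v1 v2 t u) F ∧ τ' = Fm.subst (sub2 v1 v2 u t) F
  | .caseAdd1 a b c x y z => τ' = τ ∨ progStep (.caseAdd1 a b c x y z) j τ τ'
  | .caseAdd2 a b c x y z => τ' = τ ∨ progStep (.caseAdd2 a b c x y z) j τ τ'
  | _ => τ' = τ

/-- `τ` is a trace following the tail from `k` of the path `p` in `f`. -/
def IsTraceFrom (f : Lbl) (p : ℕ → List ℕ) (k : ℕ) (τ : ℕ → Fm) : Prop :=
  ∀ i, k ≤ i →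
    ∃ (S : Seq) (r : Rule) (j : ℕ), f (p i) = some (S, r) ∧ τ i ∈ S.ant ∧ isIndAtom (τ i) ∧
      p (i + 1) = p i ++ [j] ∧ connStep r j (τ i) (τ (i + 1))

/-- The trace `τ` progresses at position `i` of the path `p`. -/
def progAt (f : Lbl) (p : ℕ → List ℕ) (τ : ℕ → Fm) (i : ℕ) : Prop :=
  ∃ (S : Seq) (r : Rule) (j : ℕ), f (p i) = some (S, r) ∧ p (i + 1) = p i ++ [j] ∧
    progStep r j (τ i) (τ (i + 1))

/-- The global trace condition for a (possibly infinite) labeling `f`. -/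
def GTC (f : Lbl) : Prop :=
  ∀ p : ℕ → List ℕ, IsInfPath f p →
    ∃ (k : ℕ) (τ : ℕ → Fm), IsTraceFrom f p k τ ∧
      ∀ n : ℕ, ∃ i, n ≤ i ∧ k ≤ i ∧ progAt f p τ i

/-- A pre-proof is a proof when its tree-unfolding satisfies the
    global trace condition. -/
def PreProof.IsProof (P : PreProof) : Prop := ∃ T : Lbl, IsUnfolding P T ∧ GTC T

/-- Some rule satisfying `Q` occurs in the labeling `f`. -/
def usesRule (f : Lbl) (Q : Rule → Prop) : Prop := ∃ σ S r, f σ = some (S, r) ∧ Q r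

/-- No occurrence of (Cut). -/
def PreProof.CutFree (P : PreProof) : Prop :=
  ¬ usesRule P.D.label (fun r => ∃ φ, r = Rule.cut φ)

/-- No occurrence of (= L_a): the pre-proof is a `CLKID^ω` pre-proof. -/
def PreProof.NoEqLa (P : PreProof) : Prop :=
  ¬ usesRule P.D.label (fun r => ∃ v1 v2 t u, r = Rule.eqLa v1 v2 t u)

/-- No occurrence of (= L): the pre-proof is a `CLKID^ω_a` pre-proof. -/
def PreProof.NoEqL (P : PreProof) : Prop :=
  ¬ usesRule P.D.label (fun r => ∃ v1 v2 t u, r = Rule.eqL v1 v2 t u)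

/-- The conclusion of the pre-proof is the sequent `S`. -/
def PreProof.Concl (P : PreProof) (S : Seq) : Prop := ∃ r, P.D.label [] = some (S, r)

/-- Provability in `CLKID^ω`. -/
def ProvableW (S : Seq) : Prop :=
  ∃ P : PreProof, P.IsProof ∧ P.NoEqLa ∧ P.Concl S

/-- Provability in `CLKID^ω_a`. -/
def ProvableWa (S : Seq) : Prop :=
  ∃ P : PreProof, P.IsProof ∧ P.NoEqL ∧ P.Concl S

/-- Cut-free provability in `CLKID^ω`. -/
def CutFreeProvableW (S : Seq) : Prop :=
  ∃ P : PreProof, P.IsProof ∧ P.CutFree ∧ P.NoEqLa ∧ P.Concl S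

/-- The sequent `Add2(x, y, z) ⊢ Add1(x, y, z)`. -/
def goalSeq : Seq :=
  ⟨{Fm.add2 (Tm.var 0) (Tm.var 1) (Tm.var 2)}, {Fm.add1 (Tm.var 0) (Tm.var 1) (Tm.var 2)}⟩

/-- A cut-free cycle-normal `CLKID^ω_a` proof of `Add2(x,y,z) ⊢ Add1(x,y,z)`. -/
def IsCNProofOfGoal (P : PreProof) : Prop :=
  P.IsProof ∧ P.CutFree ∧ P.NoEqL ∧ P.CycleNormal ∧ P.Concl goalSeq

/-- The index of an `Add2` atom with second argument `b` in the sequent `S` is `⊥`. -/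
def IndexBot (S : Seq) (b : Tm) : Prop :=
  ∀ a' b' c', Fm.add1 a' b' c' ∈ S.suc → ¬ DepTm (antSet S) b b'

/-- `σ` is a switching point of `f`: the conclusion of a `(Case Add2)` rule whose
    principal formula has index `⊥`. -/
def SwitchingPoint (f : Lbl) (σ : List ℕ) : Prop :=
  ∃ S a b c x y z, f σ = some (S, Rule.caseAdd2 a b c x y z) ∧ IndexBot S b

/-- `σ` is the conclusion of a `(Case Add2)` rule in `f`. -/
def CaseAdd2At (f : Lbl) (σ : List ℕ) : Prop :=
  ∃ S a b c x y z, f σ = some (S, Rule.caseAdd2 a b c x y z)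

/-- The node `σ` of `f` is labeled with an index sequent. -/
def IndexSequentAt (f : Lbl) (σ : List ℕ) : Prop :=
  ∃ S r, f σ = some (S, r) ∧ IndexSequent S

/-- A finite index path `p 0, …, p N` in `f`:  its first sequent is an index
    sequent, and a step to the left premise (child `0`) of a `(Case Add2)` rule
    only happens at switching points. -/
def IsIndexPathUpTo (f : Lbl) (p : ℕ → List ℕ) (N : ℕ) : Prop :=
  (∀ i, i ≤ N → f (p i) ≠ none) ∧
  (∀ i, i < N → ∃ n : ℕ, p (i + 1) = p i ++ [n]) ∧
  IndexSequentAt f (p 0) ∧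
  (∀ i, i < N → CaseAdd2At f (p i) → p (i + 1) = p i ++ [0] → SwitchingPoint f (p i))

/-- An infinite index path in `f`. -/
def IsInfIndexPath (f : Lbl) (p : ℕ → List ℕ) : Prop :=
  IsInfPath f p ∧
  IndexSequentAt f (p 0) ∧
  (∀ i, CaseAdd2At f (p i) → p (i + 1) = p i ++ [0] → SwitchingPoint f (p i))

/-- The child index chosen by the rightmost path: the right assumption of
    `(Case Add2)`, the unique premise otherwise. -/
def rightIdx : Rule → ℕ := fun r =>
  match r with
  | .caseAdd2 _ _ _ _ _ _ => 1
  | _ => 0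

/-- One step of the rightmost path in `f`. -/
def RightStep (f : Lbl) (σ σ' : List ℕ) : Prop :=
  ∃ S r, f σ = some (S, r) ∧ σ' = σ ++ [rightIdx r] ∧ f σ' ≠ none

/-- `A(Γ ⊢ Δ)` of Lemma `abc_relations`. -/
def Aset (S : Seq) : Set Tm :=
  {a | (∃ b c, Fm.add2 a b c ∈ S.ant) ∨ (∃ b c, Fm.add1 a b c ∈ S.suc) ∨ a = Tm.zero}

/-- `BC(Γ ⊢ Δ)` of Lemma `abc_relations`. -/
def BCset (S : Seq) : Set Tm :=
  {t | (∃ a c, Fm.add2 a t c ∈ S.ant) ∨ (∃ a b, Fm.add2 a b t ∈ S.ant) ∨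
       (∃ a c, Fm.add1 a t c ∈ S.suc) ∨ (∃ a b, Fm.add1 a b t ∈ S.suc)}

/-- The rules that can occur in a cut-free cycle-normal `CLKID^ω_a` proof of
    `Add2(x,y,z) ⊢ Add1(x,y,z)` (plus bud labels). -/
def allowedRule (r : Rule) : Prop :=
  r = Rule.bud ∨ r = Rule.weak ∨ (∃ θ, r = Rule.subst θ) ∨
  (∃ v1 v2 t u, r = Rule.eqLa v1 v2 t u) ∨
  (∃ a b c x y z, r = Rule.caseAdd2 a b c x y z) ∨
  r = Rule.add1R1 ∨ (∃ a b c, r = Rule.add1R2 a b c)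

/-! ### Auxiliary lemmas -/

section Aux

lemma sIter_s (n : ℕ) (t : Tm) : sIter n (Tm.s t) = Tm.s (sIter n t) := by
  induction n with
  | zero => rfl
  | succ n ih => simp [sIter, ih]

lemma sIter_add (n m : ℕ) (t : Tm) : sIter n (sIter m t) = sIter (n + m) t := by
  induction n with
  | zero => simp [sIter]
  | succ n ih => simp [sIter, ih, Nat.succ_add]

lemma fv_sIter (n : ℕ) (t : Tm) : (sIter n t).fv = t.fv := by
  induction n with
  | zero => rfl
  | succ n ih => simp [sIter, Tm.fv, ih]

lemma varOf_sIter (n : ℕ) (t : Tm) : (sIter n t).varOf = t.varOf := by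
  induction n with
  | zero => rfl
  | succ n ih => simp [sIter, Tm.varOf, ih]

lemma subst_sIter (θ : ℕ → Tm) (n : ℕ) (t : Tm) :
    (sIter n t).subst θ = sIter n (t.subst θ) := by
  induction n with
  | zero => rfl
  | succ n ih => simp [sIter, Tm.subst, ih]

lemma subst_id_of {θ : ℕ → Tm} {t : Tm} (h : ∀ v ∈ t.fv, θ v = .var v) :
    t.subst θ = t := by
  induction t with
  | var v => exact h v (by simp [Tm.fv])
  | zero => rfl
  | s t ih => simp [Tm.subst]; exact ih (fun v hv => h v (by simpa [Tm.fv] using hv))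

lemma eqv_mono {Γ₁ Γ₂ : Set Fm} (h : ∀ t u, Fm.eq t u ∈ Γ₁ → EqvTm Γ₂ t u) :
    ∀ {t u}, EqvTm Γ₁ t u → EqvTm Γ₂ t u := by
  intro t u he
  induction he with
  | base hb => exact h _ _ hb
  | refl t => exact .refl t
  | symm _ ih => exact .symm ih
  | trans _ _ ih1 ih2 => exact .trans ih1 ih2
  | sCongr _ ih => exact .sCongr ih

lemma eqv_subst {Γ₁ Γ₂ : Set Fm} {θ : ℕ → Tm}
    (h : ∀ t u, Fm.eq t u ∈ Γ₁ → EqvTm Γ₂ (t.subst θ) (u.subst θ)) :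
    ∀ {t u}, EqvTm Γ₁ t u → EqvTm Γ₂ (t.subst θ) (u.subst θ) := by
  intro t u he
  induction he with
  | base hb => exact h _ _ hb
  | refl t => exact .refl _
  | symm _ ih => exact .symm ih
  | trans _ _ ih1 ih2 => exact .trans ih1 ih2
  | sCongr _ ih => exact .sCongr ih

lemma eqv_sIter {Γ : Set Fm} (n : ℕ) {t u : Tm} (h : EqvTm Γ t u) :
    EqvTm Γ (sIter n t) (sIter n u) := by
  induction n with
  | zero => exact h
  | succ n ih => exact .sCongr ih

lemma dep_refl {Γ : Set Fm} (t : Tm) : DepTm Γ t t := ⟨0, 0, .refl t⟩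

lemma dep_symm {Γ : Set Fm} {t u : Tm} (h : DepTm Γ t u) : DepTm Γ u t := by
  obtain ⟨n, m, h⟩ := h; exact ⟨m, n, h.symm⟩

lemma dep_congr {Γ : Set Fm} {t w w' : Tm} (h : DepTm Γ t w) (he : EqvTm Γ w w') :
    DepTm Γ t w' := by
  obtain ⟨n, m, h⟩ := h
  exact ⟨n, m, h.trans (eqv_sIter m he)⟩

lemma dep_of_eqv {Γ : Set Fm} {t u : Tm} {n m : ℕ}
    (h : EqvTm Γ (sIter n t) (sIter m u)) : DepTm Γ t u := ⟨n, m, h⟩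

lemma dep_sIter_right {Γ : Set Fm} {t u : Tm} (k : ℕ) :
    DepTm Γ t (sIter k u) ↔ DepTm Γ t u := by
  constructor
  · rintro ⟨n, m, h⟩
    rw [sIter_add] at h
    exact ⟨n, m + k, h⟩
  · rintro ⟨n, m, h⟩
    refine ⟨k + n, m, ?_⟩
    have := eqv_sIter k h
    rw [sIter_add, sIter_add] at this
    rw [sIter_add]
    have h2 : m + k = k + m := Nat.add_comm _ _
    rw [h2]
    exact this

lemma dep_sIter_both {Γ : Set Fm} {t u : Tm} {n m : ℕ}
    (h : DepTm Γ (sIter n t) (sIter m u)) : DepTm Γ t u := by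
  obtain ⟨i, j, h⟩ := h
  rw [sIter_add, sIter_add] at h
  exact ⟨_, _, h⟩

lemma eqv_no_eq {Γ : Set Fm} (h : ∀ t u, Fm.eq t u ∉ Γ) :
    ∀ {t u : Tm}, EqvTm Γ t u → t = u := by
  intro t u he
  induction he with
  | base hb => exact absurd hb (h _ _)
  | refl t => rfl
  | symm _ ih => exact ih.symm
  | trans _ _ ih1 ih2 => exact ih1.trans ih2
  | sCongr _ ih => rw [ih]

/-- Chain-step relation generating `EqvTm`. -/
def Rel (Γ : Set Fm) (w w' : Tm) : Prop :=
  ∃ n t1 t2, w = sIter n t1 ∧ w' = sIter n t2 ∧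
    (Fm.eq t1 t2 ∈ Γ ∨ Fm.eq t2 t1 ∈ Γ)

lemma rel_symm {Γ : Set Fm} {w w' : Tm} (h : Rel Γ w w') : Rel Γ w' w := by
  obtain ⟨n, t1, t2, h1, h2, h3⟩ := h
  exact ⟨n, t2, t1, h2, h1, h3.symm⟩

lemma rel_eqv {Γ : Set Fm} {w w' : Tm} (h : Rel Γ w w') : EqvTm Γ w w' := by
  obtain ⟨n, t1, t2, rfl, rfl, h3 | h3⟩ := h
  · exact eqv_sIter n (.base h3)
  · exact eqv_sIter n (EqvTm.symm (.base h3))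

lemma rel_s {Γ : Set Fm} {w w' : Tm} (h : Rel Γ w w') : Rel Γ (Tm.s w) (Tm.s w') := by
  obtain ⟨n, t1, t2, rfl, rfl, h3⟩ := h
  exact ⟨n + 1, t1, t2, rfl, rfl, h3⟩

lemma chain_symm {Γ : Set Fm} {t u : Tm}
    (h : Relation.ReflTransGen (Rel Γ) t u) : Relation.ReflTransGen (Rel Γ) u t := by
  induction h with
  | refl => exact .refl
  | tail _ h2 ih => exact Relation.ReflTransGen.head (rel_symm h2) ih

lemma eqv_chain {Γ : Set Fm} {t u : Tm} (h : EqvTm Γ t u) :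
    Relation.ReflTransGen (Rel Γ) t u := by
  induction h with
  | base hb => exact Relation.ReflTransGen.single ⟨0, _, _, rfl, rfl, .inl hb⟩
  | refl t => exact .refl
  | symm _ ih => exact chain_symm ih
  | trans _ _ ih1 ih2 => exact ih1.trans ih2
  | sCongr _ ih => exact ih.lift Tm.s (fun _ _ h => rel_s h)

lemma eqv_invariant {Γ : Set Fm} {P : Tm → Prop}
    (hstep : ∀ w w', P w → Rel Γ w w' → P w') {t u : Tm}
    (h : EqvTm Γ t u) (h0 : P t) : P u := by
  have hc := eqv_chain h
  clear h
  induction hc with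
  | refl => exact h0
  | tail _ h2 ih => exact hstep _ _ ih h2

end Aux

section Invariants

/-- Shape invariant: antecedents contain only equations and `Add2` atoms,
    succedents only `Add1` atoms. -/
def Good0 (S : Seq) : Prop :=
  (∀ φ ∈ S.ant, (∃ t u, φ = Fm.eq t u) ∨ (∃ a b c, φ = Fm.add2 a b c)) ∧
  (∀ φ ∈ S.suc, ∃ a b c, φ = Fm.add1 a b c)

/-- Separation invariant: first arguments are never `~`-related to
    second/third arguments. -/
def Sep (S : Seq) : Prop := ∀ t ∈ Aset S, ∀ u ∈ BCset S, ¬ DepTm (antSet S) t u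

lemma B1_subset_BCset {S : Seq} {t : Tm} (h : t ∈ B1 S) : t ∈ BCset S := by
  obtain ⟨a, c, h⟩ := h
  exact Or.inr (Or.inr (Or.inl ⟨a, c, h⟩))

lemma Cset_subset_BCset {S : Seq} {t : Tm} (h : t ∈ Cset S) : t ∈ BCset S := by
  rcases h with ⟨a, b, h⟩ | ⟨a, b, h⟩
  · exact Or.inr (Or.inl ⟨a, b, h⟩)
  · exact Or.inr (Or.inr (Or.inr ⟨a, b, h⟩))

lemma dep_mono {Γ₁ Γ₂ : Set Fm} (h : ∀ t u, Fm.eq t u ∈ Γ₁ → EqvTm Γ₂ t u)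
    {t u : Tm} (hd : DepTm Γ₁ t u) : DepTm Γ₂ t u := by
  obtain ⟨n, m, hd⟩ := hd
  exact ⟨n, m, eqv_mono h hd⟩

/-- Swapping `t` and `u` at `v1, v2` is a congruence given `t = u`. -/
lemma swap_eqv {Γ₀ : Set Fm} {v1 v2 : ℕ} {t u : Tm} (ht : Fm.eq t u ∈ Γ₀) (w : Tm) :
    EqvTm Γ₀ (w.subst (sub2 v1 v2 u t)) (w.subst (sub2 v1 v2 t u)) := by
  induction w with
  | var v =>
    by_cases h1 : v = v1
    · simp only [Tm.subst, sub2, h1, if_pos rfl]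
      exact EqvTm.symm (.base ht)
    · by_cases h2 : v = v2
      · simp only [Tm.subst, sub2, h2, if_neg (by simpa [h2] using h1), if_pos rfl]
        exact .base ht
      · simp only [Tm.subst, sub2, if_neg h1, if_neg h2]
        exact .refl _
  | zero => exact .refl _
  | s w ih => exact .sCongr ih

/-- `x`-freeness of a target of an `EqvTm`-chain over `x`-free equations. -/
lemma eqv_xfree {ES : Set Fm} {x : ℕ}
    (hES : ∀ t1 t2, Fm.eq t1 t2 ∈ ES → x ∉ t1.fv ∧ x ∉ t2.fv)
    {α β : Tm} (h : EqvTm ES α β) (hβ : x ∉ β.fv) (hα : x ∈ α.fv) : False := by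
  have key : x ∉ α.fv ∨ α = β := by
    refine eqv_invariant (P := fun v => x ∉ v.fv ∨ v = β)
      ?_ (EqvTm.symm h) (Or.inr rfl)
    rintro w w' _ ⟨k, t1, t2, rfl, rfl, hor⟩
    left
    rw [fv_sIter]
    rcases hor with h' | h'
    · exact (hES _ _ h').2
    · exact (hES _ _ h').1
  rcases key with h' | h'
  · exact h' hα
  · rw [h'] at hα; exact hβ hα

/-- Chain analysis for the left premise of `(Case Add2)`. -/
lemma leftChain {ES : Set Fm} {a b c : Tm} {w₀ w₁ : Tm}
    (h : EqvTm (insert (Fm.eq a Tm.zero) (insert (Fm.eq c b) ES)) w₀ w₁)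
    (P : Tm → Prop)
    (hE : ∀ w w', P w → EqvTm ES w w' → P w')
    (ha : ∀ k, P (sIter k a) ∨ ¬ P (sIter k Tm.zero))
    (h0 : ∀ k, P (sIter k Tm.zero) ∨ ¬ P (sIter k a))
    (hc : ∀ k, P (sIter k c) ∨ ¬ P (sIter k b))
    (hb : ∀ k, P (sIter k b) ∨ ¬ P (sIter k c))
    (hw0 : P w₀) : P w₁ := by
  refine eqv_invariant ?_ h hw0
  rintro w w' hPw ⟨k, t1, t2, rfl, rfl, hor⟩
  have hcases : (t1 = a ∧ t2 = Tm.zero) ∨ (t1 = Tm.zero ∧ t2 = a) ∨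
      (t1 = c ∧ t2 = b) ∨ (t1 = b ∧ t2 = c) ∨
      Fm.eq t1 t2 ∈ ES ∨ Fm.eq t2 t1 ∈ ES := by
    rcases hor with h' | h' <;> simp [Set.mem_insert_iff] at h' <;> tauto
  rcases hcases with ⟨rfl, rfl⟩ | ⟨rfl, rfl⟩ | ⟨rfl, rfl⟩ | ⟨rfl, rfl⟩ | h' | h'
  · rcases h0 k with h' | h'
    · exact h'
    · exact absurd hPw h'
  · rcases ha k with h' | h'
    · exact h'
    · exact absurd hPw h'
  · rcases hb k with h' | h'
    · exact h'
    · exact absurd hPw h'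
  · rcases hc k with h' | h'
    · exact h'
    · exact absurd hPw h'
  · exact hE _ _ hPw (eqv_sIter k (.base h'))
  · exact hE _ _ hPw (eqv_sIter k (EqvTm.symm (.base h')))

/-- Chain analysis for the right premise of `(Case Add2)`. -/
lemma rightChain {ES : Set Fm} {a : Tm} {x : ℕ}
    (hES : ∀ t1 t2, Fm.eq t1 t2 ∈ ES → x ∉ t1.fv ∧ x ∉ t2.fv) (hax : x ∉ a.fv)
    {w₀ w₁ : Tm} (h : EqvTm (insert (Fm.eq a (Tm.s (Tm.var x))) ES) w₀ w₁)
    (h0 : (x ∉ w₀.fv ∧ (EqvTm ES w₀ w₀ ∨ DepTm ES a w₀)) ∨ ∃ j, w₀ = sIter j (Tm.var x)) :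
    (x ∉ w₁.fv ∧ (EqvTm ES w₀ w₁ ∨ DepTm ES a w₁)) ∨ ∃ j, w₁ = sIter j (Tm.var x) := by
  refine eqv_invariant
    (P := fun w => (x ∉ w.fv ∧ (EqvTm ES w₀ w ∨ DepTm ES a w)) ∨ ∃ j, w = sIter j (Tm.var x))
    ?_ h h0
  rintro w w' hPw ⟨k, t1, t2, rfl, rfl, hor⟩
  have hcases : (t1 = a ∧ t2 = Tm.s (Tm.var x)) ∨ (t1 = Tm.s (Tm.var x) ∧ t2 = a) ∨
      Fm.eq t1 t2 ∈ ES ∨ Fm.eq t2 t1 ∈ ES := by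
    rcases hor with h' | h' <;> simp [Set.mem_insert_iff] at h' <;> tauto
  have hESstep : ∀ (hfv1 : x ∉ t1.fv) (hfv2 : x ∉ t2.fv)
      (he : EqvTm ES (sIter k t1) (sIter k t2)),
      (x ∉ (sIter k t2).fv ∧ (EqvTm ES w₀ (sIter k t2) ∨ DepTm ES a (sIter k t2))) ∨
        ∃ j, sIter k t2 = sIter j (Tm.var x) := by
    intro hfv1 hfv2 he
    rcases hPw with ⟨hx, hEv⟩ | ⟨j, hj⟩
    · left
      refine ⟨by rwa [fv_sIter], ?_⟩
      rcases hEv with hEv | hEv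
      · exact Or.inl (hEv.trans he)
      · exact Or.inr (dep_congr hEv he)
    · exfalso
      have : (sIter j (Tm.var x)).fv = (sIter k t1).fv := by rw [hj]
      rw [fv_sIter, fv_sIter] at this
      have hxmem : x ∈ Tm.fv (Tm.var x) := by simp [Tm.fv]
      rw [this] at hxmem
      exact hfv1 hxmem
  rcases hcases with ⟨rfl, rfl⟩ | ⟨rfl, rfl⟩ | h' | h'
  · right
    exact ⟨k + 1, by rw [sIter_s]; rfl⟩
  · left
    refine ⟨by rw [fv_sIter]; exact hax, Or.inr ⟨k, 0, .refl _⟩⟩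
  · exact hESstep (hES _ _ h').1 (hES _ _ h').2 (eqv_sIter k (.base h'))
  · exact hESstep (hES _ _ h').2 (hES _ _ h').1 (eqv_sIter k (EqvTm.symm (.base h')))

end Invariants

section CaseAdd2Transfer

variable {Γ Δ : Finset Fm} {a b c : Tm} {x y z : ℕ}

lemma caseAdd2_ES_fresh
    (hfr : ∀ ψ ∈ insert (Fm.add2 a b c) (Γ ∪ Δ), x ∉ ψ.fv ∧ y ∉ ψ.fv ∧ z ∉ ψ.fv) :
    ∀ t1 t2, Fm.eq t1 t2 ∈ antSet ⟨insert (Fm.add2 a b c) Γ, Δ⟩ →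
      (x ∉ t1.fv ∧ x ∉ t2.fv) ∧ (y ∉ t1.fv ∧ y ∉ t2.fv) ∧ (z ∉ t1.fv ∧ z ∉ t2.fv) := by
  intro t1 t2 h
  simp only [antSet, Finset.coe_insert, Set.mem_insert_iff, Finset.mem_coe] at h
  rcases h with h | h
  · exact absurd h (by simp)
  · have := hfr (Fm.eq t1 t2)
      (Finset.mem_insert_of_mem (Finset.mem_union_left _ h))
    simp only [Fm.fv, Set.mem_union, not_or] at this
    tauto

lemma caseAdd2_transfer_R
    (hxy : x ≠ y) (hxz : x ≠ z) (hyz : y ≠ z)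
    (hfr : ∀ ψ ∈ insert (Fm.add2 a b c) (Γ ∪ Δ), x ∉ ψ.fv ∧ y ∉ ψ.fv ∧ z ∉ ψ.fv)
    {α β : Tm}
    (h : EqvTm (antSet ⟨insert (Fm.eq a (.s (.var x))) (insert (Fm.eq b (.var y))
        (insert (Fm.eq c (.var z))
          (insert (Fm.add2 (.var x) (.s (.var y)) (.var z)) Γ))), Δ⟩) α β) :
    EqvTm (insert (Fm.eq a (Tm.s (Tm.var x))) (antSet ⟨insert (Fm.add2 a b c) Γ, Δ⟩))
      (α.subst (fun v => if v = y then b else if v = z then c else .var v))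
      (β.subst (fun v => if v = y then b else if v = z then c else .var v)) := by
  have habc := hfr (Fm.add2 a b c) (Finset.mem_insert_self _ _)
  simp only [Fm.fv, Set.mem_union, not_or] at habc
  obtain ⟨⟨⟨hxa, hxb⟩, hxc⟩, ⟨⟨hya, hyb⟩, hyc⟩, ⟨⟨hza, hzb⟩, hzc⟩⟩ := habc
  have hid : ∀ w : Tm, y ∉ w.fv → z ∉ w.fv →
      w.subst (fun v => if v = y then b else if v = z then c else .var v) = w := by
    intro w hy hz
    apply subst_id_of
    intro v hv
    have h1 : v ≠ y := fun hvy => hy (hvy ▸ hv)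
    have h2 : v ≠ z := fun hvz => hz (hvz ▸ hv)
    simp [h1, h2]
  refine eqv_subst ?_ h
  intro t1 t2 h12
  simp only [antSet, Finset.coe_insert, Set.mem_insert_iff, Finset.mem_coe,
    Finset.mem_insert] at h12
  have hdisc : ¬ (Fm.eq t1 t2 = Fm.add2 (Tm.var x) (.s (.var y)) (.var z)) := by simp
  rcases h12 with h12 | h12 | h12 | h12 | h12
  · obtain ⟨h1, h2⟩ : t1 = a ∧ t2 = Tm.s (Tm.var x) := by
      simpa using h12
    rw [h1, h2, hid a hya hza]
    have hsx : (Tm.s (Tm.var x)).subst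
        (fun v => if v = y then b else if v = z then c else .var v) = Tm.s (Tm.var x) := by
      simp [Tm.subst, hxy, hxz]
    rw [hsx]
    exact .base (Set.mem_insert _ _)
  · obtain ⟨h1, h2⟩ : t1 = b ∧ t2 = Tm.var y := by simpa using h12
    rw [h1, h2, hid b hyb hzb]
    have : (Tm.var y).subst
        (fun v => if v = y then b else if v = z then c else .var v) = b := by
      simp [Tm.subst]
    rw [this]
    exact .refl _
  · obtain ⟨h1, h2⟩ : t1 = c ∧ t2 = Tm.var z := by simpa using h12
    rw [h1, h2, hid c hyc hzc]
    have : (Tm.var z).subst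
        (fun v => if v = y then b else if v = z then c else .var v) = c := by
      simp [Tm.subst, Ne.symm hyz]
    rw [this]
    exact .refl _
  · exact absurd h12 hdisc
  · have hfv := hfr (Fm.eq t1 t2)
      (Finset.mem_insert_of_mem (Finset.mem_union_left _ h12))
    simp only [Fm.fv, Set.mem_union, not_or] at hfv
    rw [hid t1 hfv.2.1.1 hfv.2.2.1, hid t2 hfv.2.1.2 hfv.2.2.2]
    refine .base (Set.mem_insert_of_mem _ ?_)
    simp only [antSet, Finset.coe_insert, Set.mem_insert_iff, Finset.mem_coe]
    exact Or.inr h12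

lemma caseAdd2_transfer_L
    (hfr : ∀ ψ ∈ insert (Fm.add2 a b c) (Γ ∪ Δ), x ∉ ψ.fv ∧ y ∉ ψ.fv ∧ z ∉ ψ.fv)
    {α β : Tm}
    (h : EqvTm (antSet ⟨insert (Fm.eq a .zero) (insert (Fm.eq b (.var y))
        (insert (Fm.eq c (.var y)) Γ)), Δ⟩) α β) :
    EqvTm (insert (Fm.eq a Tm.zero) (insert (Fm.eq c b) (antSet ⟨insert (Fm.add2 a b c) Γ, Δ⟩)))
      (α.subst (fun v => if v = y then b else .var v))
      (β.subst (fun v => if v = y then b else .var v)) := by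
  have habc := hfr (Fm.add2 a b c) (Finset.mem_insert_self _ _)
  simp only [Fm.fv, Set.mem_union, not_or] at habc
  obtain ⟨⟨⟨hxa, hxb⟩, hxc⟩, ⟨⟨hya, hyb⟩, hyc⟩, ⟨⟨hza, hzb⟩, hzc⟩⟩ := habc
  have hid : ∀ w : Tm, y ∉ w.fv →
      w.subst (fun v => if v = y then b else .var v) = w := by
    intro w hy
    apply subst_id_of
    intro v hv
    have h1 : v ≠ y := fun hvy => hy (hvy ▸ hv)
    simp [h1]
  refine eqv_subst ?_ h
  intro t1 t2 h12
  simp only [antSet, Finset.coe_insert, Set.mem_insert_iff, Finset.mem_coe,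
    Finset.mem_insert] at h12
  rcases h12 with h12 | h12 | h12 | h12
  · obtain ⟨h1, h2⟩ : t1 = a ∧ t2 = Tm.zero := by simpa using h12
    rw [h1, h2, hid a hya]
    have : (Tm.zero).subst (fun v => if v = y then b else .var v) = Tm.zero := rfl
    rw [this]
    exact .base (Set.mem_insert _ _)
  · obtain ⟨h1, h2⟩ : t1 = b ∧ t2 = Tm.var y := by simpa using h12
    rw [h1, h2, hid b hyb]
    have : (Tm.var y).subst (fun v => if v = y then b else .var v) = b := by
      simp [Tm.subst]
    rw [this]
    exact .refl _
  · obtain ⟨h1, h2⟩ : t1 = c ∧ t2 = Tm.var y := by simpa using h12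
    rw [h1, h2, hid c hyc]
    have : (Tm.var y).subst (fun v => if v = y then b else .var v) = b := by
      simp [Tm.subst]
    rw [this]
    exact .base (Set.mem_insert_of_mem _ (Set.mem_insert _ _))
  · have hfv := hfr (Fm.eq t1 t2)
      (Finset.mem_insert_of_mem (Finset.mem_union_left _ h12))
    simp only [Fm.fv, Set.mem_union, not_or] at hfv
    rw [hid t1 hfv.2.1.1, hid t2 hfv.2.1.2]
    refine .base (Set.mem_insert_of_mem _ (Set.mem_insert_of_mem _ ?_))
    simp only [antSet, Finset.coe_insert, Set.mem_insert_iff, Finset.mem_coe]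
    exact Or.inr h12

end CaseAdd2Transfer

/-- A term avoiding the three fresh variables. -/
def Fresh3 (x y z : ℕ) (t : Tm) : Prop := x ∉ t.fv ∧ y ∉ t.fv ∧ z ∉ t.fv

section CaseAdd2Mem

variable {Γ Δ : Finset Fm} {a b c : Tm} {x y z : ℕ}

lemma fresh3_arg
    (hfr : ∀ ψ ∈ insert (Fm.add2 a b c) (Γ ∪ Δ), x ∉ ψ.fv ∧ y ∉ ψ.fv ∧ z ∉ ψ.fv)
    {p q r : Tm}
    (h : Fm.add2 p q r ∈ insert (Fm.add2 a b c) Γ ∨ Fm.add1 p q r ∈ Δ) :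
    Fresh3 x y z p ∧ Fresh3 x y z q ∧ Fresh3 x y z r := by
  have hfv : x ∉ p.fv ∪ q.fv ∪ r.fv ∧ y ∉ p.fv ∪ q.fv ∪ r.fv ∧
      z ∉ p.fv ∪ q.fv ∪ r.fv := by
    rcases h with h | h
    · have hm : Fm.add2 p q r ∈ insert (Fm.add2 a b c) (Γ ∪ Δ) := by
        rcases Finset.mem_insert.mp h with h | h
        · exact h ▸ Finset.mem_insert_self _ _
        · exact Finset.mem_insert_of_mem (Finset.mem_union_left _ h)
      simpa [Fm.fv] using hfr _ hm
    · have hm : Fm.add1 p q r ∈ insert (Fm.add2 a b c) (Γ ∪ Δ) :=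
        Finset.mem_insert_of_mem (Finset.mem_union_right _ h)
      simpa [Fm.fv] using hfr _ hm
  obtain ⟨h1, h2, h3⟩ := hfv
  simp only [Set.mem_union, not_or] at h1 h2 h3
  exact ⟨⟨h1.1.1, h2.1.1, h3.1.1⟩, ⟨h1.1.2, h2.1.2, h3.1.2⟩, ⟨h1.2, h2.2, h3.2⟩⟩

lemma fresh3_zero : Fresh3 x y z Tm.zero := by
  refine ⟨?_, ?_, ?_⟩ <;> simp [Tm.fv]

lemma fresh3_AsetS0
    (hfr : ∀ ψ ∈ insert (Fm.add2 a b c) (Γ ∪ Δ), x ∉ ψ.fv ∧ y ∉ ψ.fv ∧ z ∉ ψ.fv) :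
    ∀ t ∈ Aset ⟨insert (Fm.add2 a b c) Γ, Δ⟩, Fresh3 x y z t := by
  rintro t (⟨p, q, h⟩ | ⟨p, q, h⟩ | rfl)
  · exact (fresh3_arg hfr (Or.inl h)).1
  · exact (fresh3_arg hfr (Or.inr h)).1
  · exact fresh3_zero

lemma fresh3_BCsetS0
    (hfr : ∀ ψ ∈ insert (Fm.add2 a b c) (Γ ∪ Δ), x ∉ ψ.fv ∧ y ∉ ψ.fv ∧ z ∉ ψ.fv) :
    ∀ t ∈ BCset ⟨insert (Fm.add2 a b c) Γ, Δ⟩, Fresh3 x y z t := by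
  rintro t (⟨p, q, h⟩ | ⟨p, q, h⟩ | ⟨p, q, h⟩ | ⟨p, q, h⟩)
  · exact (fresh3_arg hfr (Or.inl h)).2.1
  · exact (fresh3_arg hfr (Or.inl h)).2.2
  · exact (fresh3_arg hfr (Or.inr h)).2.1
  · exact (fresh3_arg hfr (Or.inr h)).2.2

lemma fresh3_B1S0
    (hfr : ∀ ψ ∈ insert (Fm.add2 a b c) (Γ ∪ Δ), x ∉ ψ.fv ∧ y ∉ ψ.fv ∧ z ∉ ψ.fv) :
    ∀ t ∈ B1 ⟨insert (Fm.add2 a b c) Γ, Δ⟩, Fresh3 x y z t := by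
  rintro t ⟨p, q, h⟩
  exact (fresh3_arg hfr (Or.inr h)).2.1

lemma fresh3_CsetS0
    (hfr : ∀ ψ ∈ insert (Fm.add2 a b c) (Γ ∪ Δ), x ∉ ψ.fv ∧ y ∉ ψ.fv ∧ z ∉ ψ.fv) :
    ∀ t ∈ Cset ⟨insert (Fm.add2 a b c) Γ, Δ⟩, Fresh3 x y z t := by
  rintro t (⟨p, q, h⟩ | ⟨p, q, h⟩)
  · exact (fresh3_arg hfr (Or.inl h)).2.2
  · exact (fresh3_arg hfr (Or.inr h)).2.2

lemma AsetL_sub :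
    Aset ⟨insert (Fm.eq a .zero) (insert (Fm.eq b (.var y)) (insert (Fm.eq c (.var y)) Γ)), Δ⟩
      ⊆ Aset ⟨insert (Fm.add2 a b c) Γ, Δ⟩ := by
  rintro t (⟨p, q, h⟩ | ⟨p, q, h⟩ | rfl)
  · simp only [Finset.mem_insert] at h
    rcases h with h | h | h | h
    · exact absurd h (by simp)
    · exact absurd h (by simp)
    · exact absurd h (by simp)
    · exact Or.inl ⟨p, q, Finset.mem_insert_of_mem h⟩
  · exact Or.inr (Or.inl ⟨p, q, h⟩)
  · exact Or.inr (Or.inr rfl)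

lemma BCsetL_sub :
    BCset ⟨insert (Fm.eq a .zero) (insert (Fm.eq b (.var y)) (insert (Fm.eq c (.var y)) Γ)), Δ⟩
      ⊆ BCset ⟨insert (Fm.add2 a b c) Γ, Δ⟩ := by
  rintro t (⟨p, q, h⟩ | ⟨p, q, h⟩ | ⟨p, q, h⟩ | ⟨p, q, h⟩)
  · simp only [Finset.mem_insert] at h
    rcases h with h | h | h | h
    · exact absurd h (by simp)
    · exact absurd h (by simp)
    · exact absurd h (by simp)
    · exact Or.inl ⟨p, q, Finset.mem_insert_of_mem h⟩
  · simp only [Finset.mem_insert] at h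
    rcases h with h | h | h | h
    · exact absurd h (by simp)
    · exact absurd h (by simp)
    · exact absurd h (by simp)
    · exact Or.inr (Or.inl ⟨p, q, Finset.mem_insert_of_mem h⟩)
  · exact Or.inr (Or.inr (Or.inl ⟨p, q, h⟩))
  · exact Or.inr (Or.inr (Or.inr ⟨p, q, h⟩))

lemma CsetL_sub :
    Cset ⟨insert (Fm.eq a .zero) (insert (Fm.eq b (.var y)) (insert (Fm.eq c (.var y)) Γ)), Δ⟩
      ⊆ Cset ⟨insert (Fm.add2 a b c) Γ, Δ⟩ := by
  rintro t (⟨p, q, h⟩ | ⟨p, q, h⟩)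
  · simp only [Finset.mem_insert] at h
    rcases h with h | h | h | h
    · exact absurd h (by simp)
    · exact absurd h (by simp)
    · exact absurd h (by simp)
    · exact Or.inl ⟨p, q, Finset.mem_insert_of_mem h⟩
  · exact Or.inr ⟨p, q, h⟩

lemma AsetR_cases {t : Tm}
    (h : t ∈ Aset ⟨insert (Fm.eq a (.s (.var x))) (insert (Fm.eq b (.var y))
      (insert (Fm.eq c (.var z)) (insert (Fm.add2 (.var x) (.s (.var y)) (.var z)) Γ))), Δ⟩) :
    t = Tm.var x ∨ t ∈ Aset ⟨insert (Fm.add2 a b c) Γ, Δ⟩ := by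
  rcases h with ⟨p, q, h⟩ | ⟨p, q, h⟩ | rfl
  · simp only [Finset.mem_insert] at h
    rcases h with h | h | h | h | h
    · exact absurd h (by simp)
    · exact absurd h (by simp)
    · exact absurd h (by simp)
    · obtain ⟨h1, _, _⟩ : t = Tm.var x ∧ p = Tm.s (Tm.var y) ∧ q = Tm.var z := by
        simpa using h
      exact Or.inl h1
    · exact Or.inr (Or.inl ⟨p, q, Finset.mem_insert_of_mem h⟩)
  · exact Or.inr (Or.inr (Or.inl ⟨p, q, h⟩))
  · exact Or.inr (Or.inr (Or.inr rfl))

lemma BCsetR_cases {t : Tm}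
    (h : t ∈ BCset ⟨insert (Fm.eq a (.s (.var x))) (insert (Fm.eq b (.var y))
      (insert (Fm.eq c (.var z)) (insert (Fm.add2 (.var x) (.s (.var y)) (.var z)) Γ))), Δ⟩) :
    t = Tm.s (Tm.var y) ∨ t = Tm.var z ∨ t ∈ BCset ⟨insert (Fm.add2 a b c) Γ, Δ⟩ := by
  rcases h with ⟨p, q, h⟩ | ⟨p, q, h⟩ | ⟨p, q, h⟩ | ⟨p, q, h⟩
  · simp only [Finset.mem_insert] at h
    rcases h with h | h | h | h | h
    · exact absurd h (by simp)
    · exact absurd h (by simp)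
    · exact absurd h (by simp)
    · obtain ⟨_, h2, _⟩ : p = Tm.var x ∧ t = Tm.s (Tm.var y) ∧ q = Tm.var z := by
        simpa using h
      exact Or.inl h2
    · exact Or.inr (Or.inr (Or.inl ⟨p, q, Finset.mem_insert_of_mem h⟩))
  · simp only [Finset.mem_insert] at h
    rcases h with h | h | h | h | h
    · exact absurd h (by simp)
    · exact absurd h (by simp)
    · exact absurd h (by simp)
    · obtain ⟨_, _, h3⟩ : p = Tm.var x ∧ q = Tm.s (Tm.var y) ∧ t = Tm.var z := by
        simpa using h
      exact Or.inr (Or.inl h3)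
    · exact Or.inr (Or.inr (Or.inr (Or.inl ⟨p, q, Finset.mem_insert_of_mem h⟩)))
  · exact Or.inr (Or.inr (Or.inr (Or.inr (Or.inl ⟨p, q, h⟩))))
  · exact Or.inr (Or.inr (Or.inr (Or.inr (Or.inr ⟨p, q, h⟩))))

lemma CsetR_cases {t : Tm}
    (h : t ∈ Cset ⟨insert (Fm.eq a (.s (.var x))) (insert (Fm.eq b (.var y))
      (insert (Fm.eq c (.var z)) (insert (Fm.add2 (.var x) (.s (.var y)) (.var z)) Γ))), Δ⟩) :
    t = Tm.var z ∨ t ∈ Cset ⟨insert (Fm.add2 a b c) Γ, Δ⟩ := by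
  rcases h with ⟨p, q, h⟩ | ⟨p, q, h⟩
  · simp only [Finset.mem_insert] at h
    rcases h with h | h | h | h | h
    · exact absurd h (by simp)
    · exact absurd h (by simp)
    · exact absurd h (by simp)
    · obtain ⟨_, _, h3⟩ : p = Tm.var x ∧ q = Tm.s (Tm.var y) ∧ t = Tm.var z := by
        simpa using h
      exact Or.inl h3
    · exact Or.inr (Or.inl ⟨p, q, Finset.mem_insert_of_mem h⟩)
  · exact Or.inr (Or.inr ⟨p, q, h⟩)

end CaseAdd2Mem

lemma sIter_var_ne {w : Tm} {x : ℕ} (hx : x ∉ w.fv) (m j : ℕ) :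
    sIter m w ≠ sIter j (Tm.var x) := by
  intro h
  have h2 := congrArg Tm.fv h
  rw [fv_sIter, fv_sIter] at h2
  apply hx
  rw [h2]; simp [Tm.fv]

lemma dep_congr2 {Γ : Set Fm} {t u t' u' : Tm} (h : DepTm Γ t u)
    (ht : EqvTm Γ t t') (hu : EqvTm Γ u u') : DepTm Γ t' u' :=
  dep_congr (dep_symm (dep_congr (dep_symm h) ht)) hu

section EqLaMem

variable {Γ Δ : Finset Fm} {v1 v2 : ℕ} {t u : Tm}

lemma mem_image_inv_add2 {Γ : Finset Fm} {θ : ℕ → Tm} {p q r : Tm}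
    (h : Fm.add2 p q r ∈ Γ.image (Fm.subst θ)) :
    ∃ p' q' r', Fm.add2 p' q' r' ∈ Γ ∧ p'.subst θ = p ∧ q'.subst θ = q ∧ r'.subst θ = r := by
  obtain ⟨φ, hφ, hsub⟩ := Finset.mem_image.mp h
  cases φ <;> simp [Fm.subst] at hsub
  rename_i p' q' r'
  exact ⟨p', q', r', hφ, hsub.1, hsub.2.1, hsub.2.2⟩

lemma mem_image_inv_add1 {Γ : Finset Fm} {θ : ℕ → Tm} {p q r : Tm}
    (h : Fm.add1 p q r ∈ Γ.image (Fm.subst θ)) :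
    ∃ p' q' r', Fm.add1 p' q' r' ∈ Γ ∧ p'.subst θ = p ∧ q'.subst θ = q ∧ r'.subst θ = r := by
  obtain ⟨φ, hφ, hsub⟩ := Finset.mem_image.mp h
  cases φ <;> simp [Fm.subst] at hsub
  rename_i p' q' r'
  exact ⟨p', q', r', hφ, hsub.1, hsub.2.1, hsub.2.2⟩

lemma mem_image_inv_eq {Γ : Finset Fm} {θ : ℕ → Tm} {p q : Tm}
    (h : Fm.eq p q ∈ Γ.image (Fm.subst θ)) :
    ∃ p' q', Fm.eq p' q' ∈ Γ ∧ p'.subst θ = p ∧ q'.subst θ = q := by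
  obtain ⟨φ, hφ, hsub⟩ := Finset.mem_image.mp h
  cases φ <;> simp [Fm.subst] at hsub
  rename_i p' q'
  exact ⟨p', q', hφ, hsub.1, hsub.2⟩

lemma eqLa_htu : Fm.eq t u ∈ antSet ⟨insert (Fm.eq t u) (Γ.image (Fm.subst (sub2 v1 v2 t u))),
    Δ.image (Fm.subst (sub2 v1 v2 t u))⟩ :=
  Finset.mem_coe.mpr (Finset.mem_insert_self _ _)

lemma eqLa_mono {α β : Tm}
    (h : EqvTm (antSet ⟨insert (Fm.eq t u) (Γ.image (Fm.subst (sub2 v1 v2 u t))),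
        Δ.image (Fm.subst (sub2 v1 v2 u t))⟩) α β) :
    EqvTm (antSet ⟨insert (Fm.eq t u) (Γ.image (Fm.subst (sub2 v1 v2 t u))),
        Δ.image (Fm.subst (sub2 v1 v2 t u))⟩) α β := by
  refine eqv_mono ?_ h
  intro t1 t2 h12
  simp only [antSet, Finset.coe_insert, Set.mem_insert_iff, Finset.mem_coe] at h12
  rcases h12 with h12 | h12
  · obtain ⟨h1, h2⟩ : t1 = t ∧ t2 = u := by simpa using h12
    rw [h1, h2]
    exact .base eqLa_htu
  · obtain ⟨p, q, hpq, hp, hq⟩ := mem_image_inv_eq h12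
    rw [← hp, ← hq]
    have hmem : Fm.eq (p.subst (sub2 v1 v2 t u)) (q.subst (sub2 v1 v2 t u)) ∈
        antSet ⟨insert (Fm.eq t u) (Γ.image (Fm.subst (sub2 v1 v2 t u))),
          Δ.image (Fm.subst (sub2 v1 v2 t u))⟩ := by
      simp only [antSet, Finset.coe_insert, Set.mem_insert_iff, Finset.mem_coe]
      refine Or.inr (Finset.mem_image.mpr ⟨Fm.eq p q, hpq, rfl⟩)
    exact (swap_eqv eqLa_htu p).trans ((EqvTm.base hmem).trans (swap_eqv eqLa_htu q).symm)

lemma eqLa_Aset {t₀ : Tm}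
    (h : t₀ ∈ Aset ⟨insert (Fm.eq t u) (Γ.image (Fm.subst (sub2 v1 v2 u t))),
        Δ.image (Fm.subst (sub2 v1 v2 u t))⟩) :
    ∃ t₁ ∈ Aset ⟨insert (Fm.eq t u) (Γ.image (Fm.subst (sub2 v1 v2 t u))),
        Δ.image (Fm.subst (sub2 v1 v2 t u))⟩,
      EqvTm (antSet ⟨insert (Fm.eq t u) (Γ.image (Fm.subst (sub2 v1 v2 t u))),
        Δ.image (Fm.subst (sub2 v1 v2 t u))⟩) t₀ t₁ := by
  rcases h with ⟨p, q, h⟩ | ⟨p, q, h⟩ | rfl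
  · rcases Finset.mem_insert.mp h with h | h
    · exact absurd h (by simp)
    · obtain ⟨p', q', r', hm, hp, hq, hr⟩ := mem_image_inv_add2 h
      refine ⟨p'.subst (sub2 v1 v2 t u), Or.inl ⟨_, _, Finset.mem_insert_of_mem
        (Finset.mem_image.mpr ⟨Fm.add2 p' q' r', hm, rfl⟩)⟩, ?_⟩
      rw [← hp]
      exact swap_eqv eqLa_htu p'
  · obtain ⟨p', q', r', hm, hp, hq, hr⟩ := mem_image_inv_add1 h
    refine ⟨p'.subst (sub2 v1 v2 t u), Or.inr (Or.inl ⟨_, _,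
      Finset.mem_image.mpr ⟨Fm.add1 p' q' r', hm, rfl⟩⟩), ?_⟩
    rw [← hp]
    exact swap_eqv eqLa_htu p'
  · exact ⟨Tm.zero, Or.inr (Or.inr rfl), .refl _⟩

lemma eqLa_BCset {t₀ : Tm}
    (h : t₀ ∈ BCset ⟨insert (Fm.eq t u) (Γ.image (Fm.subst (sub2 v1 v2 u t))),
        Δ.image (Fm.subst (sub2 v1 v2 u t))⟩) :
    ∃ t₁ ∈ BCset ⟨insert (Fm.eq t u) (Γ.image (Fm.subst (sub2 v1 v2 t u))),
        Δ.image (Fm.subst (sub2 v1 v2 t u))⟩,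
      EqvTm (antSet ⟨insert (Fm.eq t u) (Γ.image (Fm.subst (sub2 v1 v2 t u))),
        Δ.image (Fm.subst (sub2 v1 v2 t u))⟩) t₀ t₁ := by
  rcases h with ⟨p, q, h⟩ | ⟨p, q, h⟩ | ⟨p, q, h⟩ | ⟨p, q, h⟩
  · rcases Finset.mem_insert.mp h with h | h
    · exact absurd h (by simp)
    · obtain ⟨p', q', r', hm, hp, hq, hr⟩ := mem_image_inv_add2 h
      refine ⟨q'.subst (sub2 v1 v2 t u), Or.inl ⟨_, _, Finset.mem_insert_of_mem
        (Finset.mem_image.mpr ⟨Fm.add2 p' q' r', hm, rfl⟩)⟩, ?_⟩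
      rw [← hq]
      exact swap_eqv eqLa_htu q'
  · rcases Finset.mem_insert.mp h with h | h
    · exact absurd h (by simp)
    · obtain ⟨p', q', r', hm, hp, hq, hr⟩ := mem_image_inv_add2 h
      refine ⟨r'.subst (sub2 v1 v2 t u), Or.inr (Or.inl ⟨_, _, Finset.mem_insert_of_mem
        (Finset.mem_image.mpr ⟨Fm.add2 p' q' r', hm, rfl⟩)⟩), ?_⟩
      rw [← hr]
      exact swap_eqv eqLa_htu r'
  · obtain ⟨p', q', r', hm, hp, hq, hr⟩ := mem_image_inv_add1 h
    refine ⟨q'.subst (sub2 v1 v2 t u), Or.inr (Or.inr (Or.inl ⟨_, _,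
      Finset.mem_image.mpr ⟨Fm.add1 p' q' r', hm, rfl⟩⟩)), ?_⟩
    rw [← hq]
    exact swap_eqv eqLa_htu q'
  · obtain ⟨p', q', r', hm, hp, hq, hr⟩ := mem_image_inv_add1 h
    refine ⟨r'.subst (sub2 v1 v2 t u), Or.inr (Or.inr (Or.inr ⟨_, _,
      Finset.mem_image.mpr ⟨Fm.add1 p' q' r', hm, rfl⟩⟩)), ?_⟩
    rw [← hr]
    exact swap_eqv eqLa_htu r'

lemma eqLa_B1 {t₀ : Tm}
    (h : t₀ ∈ B1 ⟨insert (Fm.eq t u) (Γ.image (Fm.subst (sub2 v1 v2 u t))),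
        Δ.image (Fm.subst (sub2 v1 v2 u t))⟩) :
    ∃ t₁ ∈ B1 ⟨insert (Fm.eq t u) (Γ.image (Fm.subst (sub2 v1 v2 t u))),
        Δ.image (Fm.subst (sub2 v1 v2 t u))⟩,
      EqvTm (antSet ⟨insert (Fm.eq t u) (Γ.image (Fm.subst (sub2 v1 v2 t u))),
        Δ.image (Fm.subst (sub2 v1 v2 t u))⟩) t₀ t₁ := by
  obtain ⟨p, q, h⟩ := h
  obtain ⟨p', q', r', hm, hp, hq, hr⟩ := mem_image_inv_add1 h
  refine ⟨q'.subst (sub2 v1 v2 t u), ⟨_, _,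
    Finset.mem_image.mpr ⟨Fm.add1 p' q' r', hm, rfl⟩⟩, ?_⟩
  rw [← hq]
  exact swap_eqv eqLa_htu q'

lemma eqLa_Cset {t₀ : Tm}
    (h : t₀ ∈ Cset ⟨insert (Fm.eq t u) (Γ.image (Fm.subst (sub2 v1 v2 u t))),
        Δ.image (Fm.subst (sub2 v1 v2 u t))⟩) :
    ∃ t₁ ∈ Cset ⟨insert (Fm.eq t u) (Γ.image (Fm.subst (sub2 v1 v2 t u))),
        Δ.image (Fm.subst (sub2 v1 v2 t u))⟩,
      EqvTm (antSet ⟨insert (Fm.eq t u) (Γ.image (Fm.subst (sub2 v1 v2 t u))),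
        Δ.image (Fm.subst (sub2 v1 v2 t u))⟩) t₀ t₁ := by
  rcases h with ⟨p, q, h⟩ | ⟨p, q, h⟩
  · rcases Finset.mem_insert.mp h with h | h
    · exact absurd h (by simp)
    · obtain ⟨p', q', r', hm, hp, hq, hr⟩ := mem_image_inv_add2 h
      refine ⟨r'.subst (sub2 v1 v2 t u), Or.inl ⟨_, _, Finset.mem_insert_of_mem
        (Finset.mem_image.mpr ⟨Fm.add2 p' q' r', hm, rfl⟩)⟩, ?_⟩
      rw [← hr]
      exact swap_eqv eqLa_htu r'
  · obtain ⟨p', q', r', hm, hp, hq, hr⟩ := mem_image_inv_add1 h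
    refine ⟨r'.subst (sub2 v1 v2 t u), Or.inr ⟨_, _,
      Finset.mem_image.mpr ⟨Fm.add1 p' q' r', hm, rfl⟩⟩, ?_⟩
    rw [← hr]
    exact swap_eqv eqLa_htu r'

end EqLaMem

lemma antSet_sub_eqv {Γ Γ' Δ Δ' : Finset Fm} (hΓ : Γ' ⊆ Γ) :
    ∀ t1 t2, Fm.eq t1 t2 ∈ antSet ⟨Γ', Δ'⟩ → EqvTm (antSet (⟨Γ, Δ⟩ : Seq)) t1 t2 :=
  fun _ _ h12 => .base (Finset.mem_coe.mpr (hΓ (Finset.mem_coe.mp h12)))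

lemma subst_antSet_eqv {Γ Δ : Finset Fm} {θ : ℕ → Tm} :
    ∀ t1 t2, Fm.eq t1 t2 ∈ antSet (⟨Γ, Δ⟩ : Seq) →
      EqvTm (antSet (⟨Γ.image (Fm.subst θ), Δ.image (Fm.subst θ)⟩ : Seq))
        (t1.subst θ) (t2.subst θ) := by
  intro t1 t2 h12
  refine .base (Finset.mem_coe.mpr ?_)
  exact Finset.mem_image.mpr ⟨Fm.eq t1 t2, Finset.mem_coe.mp h12, rfl⟩

lemma step_GI {S : Seq} {r : Rule} {prems : List Seq} (hInf : Inf r S prems)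
    (hG : Good0 S) (hSep : Sep S)
    (hcut : ∀ φ, r ≠ .cut φ) (heqL : ∀ v1 v2 t' u', r ≠ .eqL v1 v2 t' u') :
    ∀ S' ∈ prems, Good0 S' ∧ Sep S' := by
  cases hInf with
  | ax h => intro S' h'; simp at h'
  | @weak Γ Δ Γ' Δ' hΓ hΔ =>
    intro S' h'
    simp only [List.mem_singleton] at h'
    subst h'
    refine ⟨⟨fun φ hφ => hG.1 φ (hΓ hφ), fun φ hφ => hG.2 φ (hΔ hφ)⟩, ?_⟩
    intro t₀ ht₀ u₀ hu₀ hdep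
    refine hSep t₀ ?_ u₀ ?_ (dep_mono (antSet_sub_eqv hΓ) hdep)
    · rcases ht₀ with ⟨p, q, h⟩ | ⟨p, q, h⟩ | h
      · exact Or.inl ⟨p, q, hΓ h⟩
      · exact Or.inr (Or.inl ⟨p, q, hΔ h⟩)
      · exact Or.inr (Or.inr h)
    · rcases hu₀ with ⟨p, q, h⟩ | ⟨p, q, h⟩ | ⟨p, q, h⟩ | ⟨p, q, h⟩
      · exact Or.inl ⟨p, q, hΓ h⟩
      · exact Or.inr (Or.inl ⟨p, q, hΓ h⟩)
      · exact Or.inr (Or.inr (Or.inl ⟨p, q, hΔ h⟩))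
      · exact Or.inr (Or.inr (Or.inr ⟨p, q, hΔ h⟩))
  | cut => exact absurd rfl (hcut _)
  | @subst Γ Δ θ =>
    intro S' h'
    simp only [List.mem_singleton] at h'
    subst h'
    refine ⟨⟨?_, ?_⟩, ?_⟩
    · intro φ hφ
      have hsh := hG.1 (φ.subst θ) (Finset.mem_image_of_mem _ hφ)
      cases φ <;> simp [Fm.subst] at hsh ⊢
    · intro φ hφ
      have hsh := hG.2 (φ.subst θ) (Finset.mem_image_of_mem _ hφ)
      cases φ <;> simp [Fm.subst] at hsh ⊢
    · intro t₀ ht₀ u₀ hu₀ hdep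
      obtain ⟨n, m, hdep⟩ := hdep
      have hdep' := eqv_subst (subst_antSet_eqv (Γ := Γ) (Δ := Δ) (θ := θ)) hdep
      rw [subst_sIter, subst_sIter] at hdep'
      refine hSep (t₀.subst θ) ?_ (u₀.subst θ) ?_ ⟨n, m, hdep'⟩
      · rcases ht₀ with ⟨p, q, h⟩ | ⟨p, q, h⟩ | h
        · exact Or.inl ⟨p.subst θ, q.subst θ, Finset.mem_image_of_mem _ h⟩
        · exact Or.inr (Or.inl ⟨p.subst θ, q.subst θ, Finset.mem_image_of_mem _ h⟩)
        · rw [h]; exact Or.inr (Or.inr rfl)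
      · rcases hu₀ with ⟨p, q, h⟩ | ⟨p, q, h⟩ | ⟨p, q, h⟩ | ⟨p, q, h⟩
        · exact Or.inl ⟨p.subst θ, q.subst θ, Finset.mem_image_of_mem _ h⟩
        · exact Or.inr (Or.inl ⟨p.subst θ, q.subst θ, Finset.mem_image_of_mem _ h⟩)
        · exact Or.inr (Or.inr (Or.inl ⟨p.subst θ, q.subst θ, Finset.mem_image_of_mem _ h⟩))
        · exact Or.inr (Or.inr (Or.inr ⟨p.subst θ, q.subst θ, Finset.mem_image_of_mem _ h⟩))
  | @negL Γ Δ φ =>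
    exfalso
    rcases hG.1 (.not φ) (Finset.mem_insert_self _ _) with ⟨p, q, h⟩ | ⟨p, q, s, h⟩ <;> simp at h
  | @negR Γ Δ φ =>
    exfalso
    obtain ⟨p, q, s, h⟩ := hG.2 (.not φ) (Finset.mem_insert_self _ _)
    simp at h
  | @andL Γ Δ φ ψ =>
    exfalso
    rcases hG.1 (.and φ ψ) (Finset.mem_insert_self _ _) with ⟨p, q, h⟩ | ⟨p, q, s, h⟩ <;>
      simp at h
  | @andR Γ Δ φ ψ =>
    exfalso
    obtain ⟨p, q, s, h⟩ := hG.2 (.and φ ψ) (Finset.mem_insert_self _ _)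
    simp at h
  | @orL Γ Δ φ ψ =>
    exfalso
    rcases hG.1 (.or φ ψ) (Finset.mem_insert_self _ _) with ⟨p, q, h⟩ | ⟨p, q, s, h⟩ <;>
      simp at h
  | @orR Γ Δ φ ψ =>
    exfalso
    obtain ⟨p, q, s, h⟩ := hG.2 (.or φ ψ) (Finset.mem_insert_self _ _)
    simp at h
  | @impL Γ Δ φ ψ =>
    exfalso
    rcases hG.1 (.imp φ ψ) (Finset.mem_insert_self _ _) with ⟨p, q, h⟩ | ⟨p, q, s, h⟩ <;>
      simp at h
  | @impR Γ Δ φ ψ =>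
    exfalso
    obtain ⟨p, q, s, h⟩ := hG.2 (.imp φ ψ) (Finset.mem_insert_self _ _)
    simp at h
  | @allL Γ Δ xx tt φ =>
    exfalso
    rcases hG.1 (.all xx φ) (Finset.mem_insert_self _ _) with ⟨p, q, h⟩ | ⟨p, q, s, h⟩ <;>
      simp at h
  | @allR Γ Δ xx φ hfv =>
    exfalso
    obtain ⟨p, q, s, h⟩ := hG.2 (.all xx φ) (Finset.mem_insert_self _ _)
    simp at h
  | @exL Γ Δ xx φ hfv =>
    exfalso
    rcases hG.1 (.ex xx φ) (Finset.mem_insert_self _ _) with ⟨p, q, h⟩ | ⟨p, q, s, h⟩ <;>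
      simp at h
  | @exR Γ Δ xx tt φ =>
    exfalso
    obtain ⟨p, q, s, h⟩ := hG.2 (.ex xx φ) (Finset.mem_insert_self _ _)
    simp at h
  | eqR => intro S' h'; simp at h'
  | eqL => exact absurd rfl (heqL _ _ _ _)
  | @eqLa Γ Δ v1 v2 t u =>
    intro S' h'
    simp only [List.mem_singleton] at h'
    subst h'
    refine ⟨⟨?_, ?_⟩, ?_⟩
    · intro φ hφ
      rcases Finset.mem_insert.mp hφ with rfl | hφ
      · exact Or.inl ⟨t, u, rfl⟩
      · obtain ⟨ψ, hψ, hsub⟩ := Finset.mem_image.mp hφ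
        have hsh := hG.1 (ψ.subst (sub2 v1 v2 t u))
          (Finset.mem_insert_of_mem (Finset.mem_image_of_mem _ hψ))
        subst hsub
        cases ψ <;> simp [Fm.subst] at hsh ⊢
    · intro φ hφ
      obtain ⟨ψ, hψ, hsub⟩ := Finset.mem_image.mp hφ
      have hsh := hG.2 (ψ.subst (sub2 v1 v2 t u)) (Finset.mem_image_of_mem _ hψ)
      subst hsub
      cases ψ <;> simp [Fm.subst] at hsh ⊢
    · intro t₀ ht₀ u₀ hu₀ hdep
      obtain ⟨t₁, ht₁, het⟩ := eqLa_Aset ht₀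
      obtain ⟨u₁, hu₁, heu⟩ := eqLa_BCset hu₀
      have hdep' : DepTm (antSet ⟨insert (Fm.eq t u) (Γ.image (Fm.subst (sub2 v1 v2 t u))),
          Δ.image (Fm.subst (sub2 v1 v2 t u))⟩) t₀ u₀ := by
        obtain ⟨n, m, hd⟩ := hdep
        exact ⟨n, m, eqLa_mono hd⟩
      exact hSep t₁ ht₁ u₁ hu₁ (dep_congr2 hdep' het heu)
  | add1R1 => intro S' h'; simp at h'
  | @add1R2 Γ Δ a b c =>
    intro S' h'
    simp only [List.mem_singleton] at h'
    subst h'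
    refine ⟨⟨hG.1, ?_⟩, ?_⟩
    · intro φ hφ
      rcases Finset.mem_insert.mp hφ with rfl | hφ
      · exact ⟨a, b, c, rfl⟩
      · exact hG.2 φ (Finset.mem_insert_of_mem hφ)
    · intro t₀ ht₀ u₀ hu₀ hdep
      have key : ∀ t₁ u₁, (t₁ = t₀ ∨ t₁ = Tm.s t₀) → (u₁ = u₀ ∨ u₁ = Tm.s u₀) →
          t₁ ∈ Aset (⟨Γ, insert (Fm.add1 (.s a) b (.s c)) Δ⟩ : Seq) →
          u₁ ∈ BCset (⟨Γ, insert (Fm.add1 (.s a) b (.s c)) Δ⟩ : Seq) → False := by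
        intro t₁ u₁ h1 h2 hA hB
        apply hSep t₁ hA u₁ hB
        have hdep0 : DepTm (antSet (⟨Γ, insert (Fm.add1 (.s a) b (.s c)) Δ⟩ : Seq)) t₀ u₀ :=
          hdep
        have d1 : DepTm (antSet (⟨Γ, insert (Fm.add1 (.s a) b (.s c)) Δ⟩ : Seq)) t₁ u₀ := by
          rcases h1 with rfl | rfl
          · exact hdep0
          · exact dep_symm ((dep_sIter_right 1).mpr (dep_symm hdep0))
        rcases h2 with rfl | rfl
        · exact d1
        · exact (dep_sIter_right 1).mpr d1
      have ht₁ : ∃ t₁, (t₁ = t₀ ∨ t₁ = Tm.s t₀) ∧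
          t₁ ∈ Aset (⟨Γ, insert (Fm.add1 (.s a) b (.s c)) Δ⟩ : Seq) := by
        rcases ht₀ with ⟨p, q, h⟩ | ⟨p, q, h⟩ | h
        · exact ⟨t₀, Or.inl rfl, Or.inl ⟨p, q, h⟩⟩
        · rcases Finset.mem_insert.mp h with h | h
          · obtain ⟨h1, _, _⟩ : t₀ = a ∧ p = b ∧ q = c := by simpa using h
            refine ⟨Tm.s t₀, Or.inr rfl, ?_⟩
            rw [h1]
            exact Or.inr (Or.inl ⟨b, Tm.s c, Finset.mem_insert_self _ _⟩)
          · exact ⟨t₀, Or.inl rfl, Or.inr (Or.inl ⟨p, q, Finset.mem_insert_of_mem h⟩)⟩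
        · exact ⟨t₀, Or.inl rfl, Or.inr (Or.inr h)⟩
      have hu₁ : ∃ u₁, (u₁ = u₀ ∨ u₁ = Tm.s u₀) ∧
          u₁ ∈ BCset (⟨Γ, insert (Fm.add1 (.s a) b (.s c)) Δ⟩ : Seq) := by
        rcases hu₀ with ⟨p, q, h⟩ | ⟨p, q, h⟩ | ⟨p, q, h⟩ | ⟨p, q, h⟩
        · exact ⟨u₀, Or.inl rfl, Or.inl ⟨p, q, h⟩⟩
        · exact ⟨u₀, Or.inl rfl, Or.inr (Or.inl ⟨p, q, h⟩)⟩
        · rcases Finset.mem_insert.mp h with h | h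
          · obtain ⟨_, h2, _⟩ : p = a ∧ u₀ = b ∧ q = c := by simpa using h
            refine ⟨u₀, Or.inl rfl, ?_⟩
            rw [h2]
            exact Or.inr (Or.inr (Or.inl ⟨Tm.s a, Tm.s c, Finset.mem_insert_self _ _⟩))
          · exact ⟨u₀, Or.inl rfl, Or.inr (Or.inr (Or.inl ⟨p, q, Finset.mem_insert_of_mem h⟩))⟩
        · rcases Finset.mem_insert.mp h with h | h
          · obtain ⟨_, _, h3⟩ : p = a ∧ q = b ∧ u₀ = c := by simpa using h
            refine ⟨Tm.s u₀, Or.inr rfl, ?_⟩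
            rw [h3]
            exact Or.inr (Or.inr (Or.inr ⟨Tm.s a, b, Finset.mem_insert_self _ _⟩))
          · exact ⟨u₀, Or.inl rfl, Or.inr (Or.inr (Or.inr ⟨p, q, Finset.mem_insert_of_mem h⟩))⟩
      obtain ⟨t₁, h1, hA⟩ := ht₁
      obtain ⟨u₁, h2, hB⟩ := hu₁
      exact key t₁ u₁ h1 h2 hA hB
  | add2R1 => intro S' h'; simp at h'
  | @add2R2 Γ Δ a b c =>
    exfalso
    obtain ⟨p, q, s, h⟩ := hG.2 (.add2 (.s a) b c) (Finset.mem_insert_self _ _)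
    simp at h
  | @caseAdd1 Γ Δ a b c x y z hxy hxz hyz hfr =>
    exfalso
    rcases hG.1 (.add1 a b c) (Finset.mem_insert_self _ _) with ⟨p, q, h⟩ | ⟨p, q, s, h⟩ <;>
      simp at h
  | @caseAdd2 Γ Δ a b c x y z hxy hxz hyz hfr =>
    intro S' h'
    have hES := caseAdd2_ES_fresh hfr
    obtain ⟨hfa, hfb, hfc⟩ := fresh3_arg hfr (Or.inl (Finset.mem_insert_self _ _))
    have haA : a ∈ Aset (⟨insert (Fm.add2 a b c) Γ, Δ⟩ : Seq) :=
      Or.inl ⟨b, c, Finset.mem_insert_self _ _⟩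
    have h0A : Tm.zero ∈ Aset (⟨insert (Fm.add2 a b c) Γ, Δ⟩ : Seq) := Or.inr (Or.inr rfl)
    have hbBC : b ∈ BCset (⟨insert (Fm.add2 a b c) Γ, Δ⟩ : Seq) :=
      Or.inl ⟨a, c, Finset.mem_insert_self _ _⟩
    have hcBC : c ∈ BCset (⟨insert (Fm.add2 a b c) Γ, Δ⟩ : Seq) :=
      Or.inr (Or.inl ⟨a, b, Finset.mem_insert_self _ _⟩)
    simp only [List.mem_cons, List.not_mem_nil, or_false] at h'
    rcases h' with rfl | rfl
    · -- left premise
      refine ⟨⟨?_, hG.2⟩, ?_⟩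
      · intro φ hφ
        simp only [Finset.mem_insert] at hφ
        rcases hφ with rfl | rfl | rfl | hφ
        · exact Or.inl ⟨_, _, rfl⟩
        · exact Or.inl ⟨_, _, rfl⟩
        · exact Or.inl ⟨_, _, rfl⟩
        · exact hG.1 φ (Finset.mem_insert_of_mem hφ)
      · intro t₀ ht₀ u₀ hu₀ hdep
        have htA := AsetL_sub ht₀
        have huBC := BCsetL_sub hu₀
        have hft := fresh3_AsetS0 hfr t₀ htA
        have hfu := fresh3_BCsetS0 hfr u₀ huBC
        obtain ⟨n, m, heqv⟩ := hdep
        have h2 := caseAdd2_transfer_L hfr heqv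
        rw [subst_sIter, subst_sIter] at h2
        have hid1 : t₀.subst (fun v => if v = y then b else .var v) = t₀ :=
          subst_id_of (fun v hv => by
            simp [show v ≠ y from fun h => hft.2.1 (h ▸ hv)])
        have hid2 : u₀.subst (fun v => if v = y then b else .var v) = u₀ :=
          subst_id_of (fun v hv => by
            simp [show v ≠ y from fun h => hfu.2.1 (h ▸ hv)])
        rw [hid1, hid2] at h2
        have hP := leftChain h2 (fun w =>
            DepTm (antSet (⟨insert (Fm.add2 a b c) Γ, Δ⟩ : Seq)) t₀ w ∨
            DepTm (antSet (⟨insert (Fm.add2 a b c) Γ, Δ⟩ : Seq)) a w ∨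
            DepTm (antSet (⟨insert (Fm.add2 a b c) Γ, Δ⟩ : Seq)) Tm.zero w)
          (by
            rintro w w' (hw | hw | hw) he
            · exact Or.inl (dep_congr hw he)
            · exact Or.inr (Or.inl (dep_congr hw he))
            · exact Or.inr (Or.inr (dep_congr hw he)))
          (fun k => Or.inl (Or.inr (Or.inl ⟨k, 0, .refl _⟩)))
          (fun k => Or.inl (Or.inr (Or.inr ⟨k, 0, .refl _⟩)))
          (by
            intro k
            right
            rintro (hw | hw | hw)
            · exact hSep t₀ htA b hbBC ((dep_sIter_right k).mp hw)
            · exact hSep a haA b hbBC ((dep_sIter_right k).mp hw)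
            · exact hSep Tm.zero h0A b hbBC ((dep_sIter_right k).mp hw))
          (by
            intro k
            right
            rintro (hw | hw | hw)
            · exact hSep t₀ htA c hcBC ((dep_sIter_right k).mp hw)
            · exact hSep a haA c hcBC ((dep_sIter_right k).mp hw)
            · exact hSep Tm.zero h0A c hcBC ((dep_sIter_right k).mp hw))
          (Or.inl ⟨n, 0, .refl _⟩)
        rcases hP with hw | hw | hw
        · exact hSep t₀ htA u₀ huBC ((dep_sIter_right m).mp hw)
        · exact hSep a haA u₀ huBC ((dep_sIter_right m).mp hw)
        · exact hSep Tm.zero h0A u₀ huBC ((dep_sIter_right m).mp hw)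
    · -- right premise
      refine ⟨⟨?_, hG.2⟩, ?_⟩
      · intro φ hφ
        simp only [Finset.mem_insert] at hφ
        rcases hφ with rfl | rfl | rfl | rfl | hφ
        · exact Or.inl ⟨_, _, rfl⟩
        · exact Or.inl ⟨_, _, rfl⟩
        · exact Or.inl ⟨_, _, rfl⟩
        · exact Or.inr ⟨_, _, _, rfl⟩
        · exact hG.1 φ (Finset.mem_insert_of_mem hφ)
      · intro t₀ ht₀ u₀ hu₀ hdep
        obtain ⟨n, m, heqv⟩ := hdep
        have h2 := caseAdd2_transfer_R hxy hxz hyz hfr heqv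
        rw [subst_sIter, subst_sIter] at h2
        have hES' : ∀ t1 t2, Fm.eq t1 t2 ∈ antSet (⟨insert (Fm.add2 a b c) Γ, Δ⟩ : Seq) →
            x ∉ t1.fv ∧ x ∉ t2.fv := fun t1 t2 h => ⟨(hES t1 t2 h).1.1, (hES t1 t2 h).1.2⟩
        -- analyze u₀
        have hu₁ : ∃ u₁ ∈ BCset (⟨insert (Fm.add2 a b c) Γ, Δ⟩ : Seq),
            x ∉ (u₀.subst (fun v => if v = y then b else if v = z then c else .var v)).fv ∧
            ∀ α : Tm, DepTm (antSet (⟨insert (Fm.add2 a b c) Γ, Δ⟩ : Seq)) α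
              (u₀.subst (fun v => if v = y then b else if v = z then c else .var v)) →
              DepTm (antSet (⟨insert (Fm.add2 a b c) Γ, Δ⟩ : Seq)) α u₁ := by
          rcases BCsetR_cases hu₀ with rfl | rfl | huBC
          · have hθ : (Tm.s (Tm.var y)).subst
                (fun v => if v = y then b else if v = z then c else .var v) = Tm.s b := by
              simp [Tm.subst]
            rw [hθ]
            exact ⟨b, hbBC, by simpa [Tm.fv] using hfb.1,
              fun α h => (dep_sIter_right 1).mp h⟩
          · have hθ : (Tm.var z).subst
                (fun v => if v = y then b else if v = z then c else .var v) = c := by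
              simp [Tm.subst, Ne.symm hyz]
            rw [hθ]
            exact ⟨c, hcBC, hfc.1, fun α h => h⟩
          · have hfu := fresh3_BCsetS0 hfr u₀ huBC
            have hθ : u₀.subst
                (fun v => if v = y then b else if v = z then c else .var v) = u₀ :=
              subst_id_of (fun v hv => by
                simp [show v ≠ y from fun h => hfu.2.1 (h ▸ hv),
                  show v ≠ z from fun h => hfu.2.2 (h ▸ hv)])
            rw [hθ]
            exact ⟨u₀, huBC, hfu.1, fun α h => h⟩
        obtain ⟨u₁, hu₁BC, hxu, htrans⟩ := hu₁
        rcases AsetR_cases ht₀ with rfl | htA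
        · -- t₀ = var x
          have hθ : (Tm.var x).subst
              (fun v => if v = y then b else if v = z then c else .var v) = Tm.var x := by
            simp [Tm.subst, hxy, hxz]
          rw [hθ] at h2
          have hchain := rightChain hES' hfa.1 h2 (Or.inr ⟨n, rfl⟩)
          rcases hchain with ⟨hx1, hEv | hDv⟩ | ⟨j, hj⟩
          · exact eqv_xfree hES' hEv (by rwa [fv_sIter]) (by rw [fv_sIter]; simp [Tm.fv])
          · exact hSep a haA u₁ hu₁BC (htrans a ((dep_sIter_right m).mp hDv))
          · exact sIter_var_ne hxu m j hj
        · -- t₀ old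
          have hft := fresh3_AsetS0 hfr t₀ htA
          have hθ : t₀.subst
              (fun v => if v = y then b else if v = z then c else .var v) = t₀ :=
            subst_id_of (fun v hv => by
              simp [show v ≠ y from fun h => hft.2.1 (h ▸ hv),
                show v ≠ z from fun h => hft.2.2 (h ▸ hv)])
          rw [hθ] at h2
          have hchain := rightChain hES' hfa.1 h2
            (Or.inl ⟨by rw [fv_sIter]; exact hft.1, Or.inl (.refl _)⟩)
          rcases hchain with ⟨hx1, hEv | hDv⟩ | ⟨j, hj⟩
          · exact hSep t₀ htA u₁ hu₁BC (htrans t₀ ⟨n, m, hEv⟩)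
          · exact hSep a haA u₁ hu₁BC (htrans a ((dep_sIter_right m).mp hDv))
          · exact sIter_var_ne hxu m j hj

lemma step_Index {S : Seq} {r : Rule} {prems : List Seq} (hInf : Inf r S prems)
    (hG : Good0 S) (hSep : Sep S) (hIdx : IndexSequent S)
    (hcut : ∀ φ, r ≠ .cut φ) (heqL : ∀ v1 v2 t' u', r ≠ .eqL v1 v2 t' u')
    {n : ℕ} (hn : n < prems.length)
    (hsw : n = 0 → ∀ a b c x y z, r = .caseAdd2 a b c x y z → IndexBot S b) :
    IndexSequent (prems.get ⟨n, hn⟩) := by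
  cases hInf with
  | ax h => exact absurd hn (by simp)
  | cut => exact absurd rfl (hcut _)
  | eqL => exact absurd rfl (heqL _ _ _ _)
  | eqR => exact absurd hn (by simp)
  | add1R1 => exact absurd hn (by simp)
  | add2R1 => exact absurd hn (by simp)
  | @negL Γ Δ φ =>
    exfalso
    rcases hG.1 (.not φ) (Finset.mem_insert_self _ _) with ⟨p, q, h⟩ | ⟨p, q, s, h⟩ <;> simp at h
  | @negR Γ Δ φ =>
    exfalso
    obtain ⟨p, q, s, h⟩ := hG.2 (.not φ) (Finset.mem_insert_self _ _)
    simp at h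
  | @andL Γ Δ φ ψ =>
    exfalso
    rcases hG.1 (.and φ ψ) (Finset.mem_insert_self _ _) with ⟨p, q, h⟩ | ⟨p, q, s, h⟩ <;>
      simp at h
  | @andR Γ Δ φ ψ =>
    exfalso
    obtain ⟨p, q, s, h⟩ := hG.2 (.and φ ψ) (Finset.mem_insert_self _ _)
    simp at h
  | @orL Γ Δ φ ψ =>
    exfalso
    rcases hG.1 (.or φ ψ) (Finset.mem_insert_self _ _) with ⟨p, q, h⟩ | ⟨p, q, s, h⟩ <;>
      simp at h
  | @orR Γ Δ φ ψ =>
    exfalso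
    obtain ⟨p, q, s, h⟩ := hG.2 (.or φ ψ) (Finset.mem_insert_self _ _)
    simp at h
  | @impL Γ Δ φ ψ =>
    exfalso
    rcases hG.1 (.imp φ ψ) (Finset.mem_insert_self _ _) with ⟨p, q, h⟩ | ⟨p, q, s, h⟩ <;>
      simp at h
  | @impR Γ Δ φ ψ =>
    exfalso
    obtain ⟨p, q, s, h⟩ := hG.2 (.imp φ ψ) (Finset.mem_insert_self _ _)
    simp at h
  | @allL Γ Δ xx tt φ =>
    exfalso
    rcases hG.1 (.all xx φ) (Finset.mem_insert_self _ _) with ⟨p, q, h⟩ | ⟨p, q, s, h⟩ <;>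
      simp at h
  | @allR Γ Δ xx φ hfv =>
    exfalso
    obtain ⟨p, q, s, h⟩ := hG.2 (.all xx φ) (Finset.mem_insert_self _ _)
    simp at h
  | @exL Γ Δ xx φ hfv =>
    exfalso
    rcases hG.1 (.ex xx φ) (Finset.mem_insert_self _ _) with ⟨p, q, h⟩ | ⟨p, q, s, h⟩ <;>
      simp at h
  | @exR Γ Δ xx tt φ =>
    exfalso
    obtain ⟨p, q, s, h⟩ := hG.2 (.ex xx φ) (Finset.mem_insert_self _ _)
    simp at h
  | @add2R2 Γ Δ a b c =>
    exfalso
    obtain ⟨p, q, s, h⟩ := hG.2 (.add2 (.s a) b c) (Finset.mem_insert_self _ _)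
    simp at h
  | @caseAdd1 Γ Δ a b c x y z hxy hxz hyz hfr =>
    exfalso
    rcases hG.1 (.add1 a b c) (Finset.mem_insert_self _ _) with ⟨p, q, h⟩ | ⟨p, q, s, h⟩ <;>
      simp at h
  | @weak Γ Δ Γ' Δ' hΓ hΔ =>
    obtain rfl : n = 0 := by simp only [List.length] at hn; omega
    show IndexSequent (⟨Γ', Δ'⟩ : Seq)
    constructor
    · intro t ht u hu hdep
      obtain ⟨p, q, h⟩ := ht
      refine hIdx.1 t ⟨p, q, hΔ h⟩ u ?_ (dep_mono (antSet_sub_eqv hΓ) hdep)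
      rcases hu with ⟨p', q', h'⟩ | ⟨p', q', h'⟩
      · exact Or.inl ⟨p', q', hΓ h'⟩
      · exact Or.inr ⟨p', q', hΔ h'⟩
    · intro b₁ hb₁ b₂ hb₂ n' m' he
      obtain ⟨p, q, h⟩ := hb₁
      obtain ⟨p', q', h'⟩ := hb₂
      exact hIdx.2 b₁ ⟨p, q, hΔ h⟩ b₂ ⟨p', q', hΔ h'⟩ n' m'
        (eqv_mono (antSet_sub_eqv hΓ) he)
  | @subst Γ Δ θ =>
    obtain rfl : n = 0 := by simp only [List.length] at hn; omega
    show IndexSequent (⟨Γ, Δ⟩ : Seq)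
    constructor
    · intro t ht u hu hdep
      obtain ⟨p, q, h⟩ := ht
      obtain ⟨n', m', hd⟩ := hdep
      have hd' := eqv_subst (subst_antSet_eqv (Γ := Γ) (Δ := Δ) (θ := θ)) hd
      rw [subst_sIter, subst_sIter] at hd'
      refine hIdx.1 (t.subst θ) ⟨p.subst θ, q.subst θ, Finset.mem_image_of_mem _ h⟩
        (u.subst θ) ?_ ⟨n', m', hd'⟩
      rcases hu with ⟨p', q', h'⟩ | ⟨p', q', h'⟩
      · exact Or.inl ⟨p'.subst θ, q'.subst θ, Finset.mem_image_of_mem _ h'⟩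
      · exact Or.inr ⟨p'.subst θ, q'.subst θ, Finset.mem_image_of_mem _ h'⟩
    · intro b₁ hb₁ b₂ hb₂ n' m' he
      obtain ⟨p, q, h⟩ := hb₁
      obtain ⟨p', q', h'⟩ := hb₂
      have he' := eqv_subst (subst_antSet_eqv (Γ := Γ) (Δ := Δ) (θ := θ)) he
      rw [subst_sIter, subst_sIter] at he'
      exact hIdx.2 (b₁.subst θ) ⟨_, _, Finset.mem_image_of_mem _ h⟩
        (b₂.subst θ) ⟨_, _, Finset.mem_image_of_mem _ h'⟩ n' m' he'
  | @eqLa Γ Δ v1 v2 t u =>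
    obtain rfl : n = 0 := by simp only [List.length] at hn; omega
    constructor
    · intro t₀ ht₀ u₀ hu₀ hdep
      obtain ⟨t₁, ht₁, het⟩ := eqLa_B1 ht₀
      obtain ⟨u₁, hu₁, heu⟩ := eqLa_Cset hu₀
      obtain ⟨n', m', hd⟩ := hdep
      exact hIdx.1 t₁ ht₁ u₁ hu₁ (dep_congr2 ⟨n', m', eqLa_mono hd⟩ het heu)
    · intro b₁ hb₁ b₂ hb₂ n' m' he
      obtain ⟨t₁, ht₁, het⟩ := eqLa_B1 hb₁
      obtain ⟨u₁, hu₁, heu⟩ := eqLa_B1 hb₂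
      have he' := eqLa_mono he
      exact hIdx.2 t₁ ht₁ u₁ hu₁ n' m'
        (((eqv_sIter n' het).symm.trans he').trans (eqv_sIter m' heu))
  | @add1R2 Γ Δ a b c =>
    obtain rfl : n = 0 := by simp only [List.length] at hn; omega
    show IndexSequent (⟨Γ, insert (Fm.add1 a b c) Δ⟩ : Seq)
    have hB : ∀ t₀, t₀ ∈ B1 (⟨Γ, insert (Fm.add1 a b c) Δ⟩ : Seq) →
        t₀ ∈ B1 (⟨Γ, insert (Fm.add1 (.s a) b (.s c)) Δ⟩ : Seq) := by
      rintro t₀ ⟨p, q, h⟩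
      rcases Finset.mem_insert.mp h with h | h
      · obtain ⟨_, h2, _⟩ : p = a ∧ t₀ = b ∧ q = c := by simpa using h
        rw [h2]; exact ⟨Tm.s a, Tm.s c, Finset.mem_insert_self _ _⟩
      · exact ⟨p, q, Finset.mem_insert_of_mem h⟩
    constructor
    · intro t₀ ht₀ u₀ hu₀ hdep
      have hdep0 : DepTm (antSet (⟨Γ, insert (Fm.add1 (.s a) b (.s c)) Δ⟩ : Seq)) t₀ u₀ :=
        hdep
      rcases hu₀ with ⟨p', q', h'⟩ | ⟨p', q', h'⟩
      · exact hIdx.1 t₀ (hB _ ht₀) u₀ (Or.inl ⟨p', q', h'⟩) hdep0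
      · rcases Finset.mem_insert.mp h' with h' | h'
        · obtain ⟨_, _, h3⟩ : p' = a ∧ q' = b ∧ u₀ = c := by simpa using h'
          refine hIdx.1 t₀ (hB _ ht₀) (Tm.s u₀) ?_ ((dep_sIter_right 1).mpr hdep0)
          rw [h3]; exact Or.inr ⟨Tm.s a, b, Finset.mem_insert_self _ _⟩
        · exact hIdx.1 t₀ (hB _ ht₀) u₀
            (Or.inr ⟨p', q', Finset.mem_insert_of_mem h'⟩) hdep0
    · intro b₁ hb₁ b₂ hb₂ n' m' he
      exact hIdx.2 b₁ (hB _ hb₁) b₂ (hB _ hb₂) n' m' he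
  | @caseAdd2 Γ Δ a b c x y z hxy hxz hyz hfr =>
    have hES := caseAdd2_ES_fresh hfr
    obtain ⟨hfa, hfb, hfc⟩ := fresh3_arg hfr (Or.inl (Finset.mem_insert_self _ _))
    have haA : a ∈ Aset (⟨insert (Fm.add2 a b c) Γ, Δ⟩ : Seq) :=
      Or.inl ⟨b, c, Finset.mem_insert_self _ _⟩
    have h0A : Tm.zero ∈ Aset (⟨insert (Fm.add2 a b c) Γ, Δ⟩ : Seq) := Or.inr (Or.inr rfl)
    have hbBC : b ∈ BCset (⟨insert (Fm.add2 a b c) Γ, Δ⟩ : Seq) :=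
      Or.inl ⟨a, c, Finset.mem_insert_self _ _⟩
    have hcBC : c ∈ BCset (⟨insert (Fm.add2 a b c) Γ, Δ⟩ : Seq) :=
      Or.inr (Or.inl ⟨a, b, Finset.mem_insert_self _ _⟩)
    have hcC : c ∈ Cset (⟨insert (Fm.add2 a b c) Γ, Δ⟩ : Seq) :=
      Or.inl ⟨a, b, Finset.mem_insert_self _ _⟩
    have hES' : ∀ t1 t2, Fm.eq t1 t2 ∈ antSet (⟨insert (Fm.add2 a b c) Γ, Δ⟩ : Seq) →
        x ∉ t1.fv ∧ x ∉ t2.fv := fun t1 t2 h => ⟨(hES t1 t2 h).1.1, (hES t1 t2 h).1.2⟩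
    rcases n with _ | n
    · -- left premise
      have hbot : IndexBot (⟨insert (Fm.add2 a b c) Γ, Δ⟩ : Seq) b :=
        hsw rfl a b c x y z rfl
      show IndexSequent (⟨insert (Fm.eq a .zero) (insert (Fm.eq b (.var y))
        (insert (Fm.eq c (.var y)) Γ)), Δ⟩ : Seq)
      constructor
      · intro t₀ ht₀ u₀ hu₀ hdep
        obtain ⟨p, q, hpq⟩ := ht₀
        have htB : t₀ ∈ B1 (⟨insert (Fm.add2 a b c) Γ, Δ⟩ : Seq) := ⟨p, q, hpq⟩
        have hft := fresh3_B1S0 hfr t₀ htB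
        have huC := CsetL_sub hu₀
        have hfu := fresh3_CsetS0 hfr u₀ huC
        obtain ⟨n', m', heqv⟩ := hdep
        have h2 := caseAdd2_transfer_L hfr heqv
        rw [subst_sIter, subst_sIter] at h2
        have hid1 : t₀.subst (fun v => if v = y then b else .var v) = t₀ :=
          subst_id_of (fun v hv => by
            simp [show v ≠ y from fun h => hft.2.1 (h ▸ hv)])
        have hid2 : u₀.subst (fun v => if v = y then b else .var v) = u₀ :=
          subst_id_of (fun v hv => by
            simp [show v ≠ y from fun h => hfu.2.1 (h ▸ hv)])
        rw [hid1, hid2] at h2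
        have hP := leftChain h2 (fun w =>
            DepTm (antSet (⟨insert (Fm.add2 a b c) Γ, Δ⟩ : Seq)) t₀ w ∨
            DepTm (antSet (⟨insert (Fm.add2 a b c) Γ, Δ⟩ : Seq)) a w ∨
            DepTm (antSet (⟨insert (Fm.add2 a b c) Γ, Δ⟩ : Seq)) Tm.zero w)
          (by
            rintro w w' (hw | hw | hw) he
            · exact Or.inl (dep_congr hw he)
            · exact Or.inr (Or.inl (dep_congr hw he))
            · exact Or.inr (Or.inr (dep_congr hw he)))
          (fun k => Or.inl (Or.inr (Or.inl ⟨k, 0, .refl _⟩)))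
          (fun k => Or.inl (Or.inr (Or.inr ⟨k, 0, .refl _⟩)))
          (by
            intro k
            right
            rintro (hw | hw | hw)
            · exact hbot p t₀ q hpq (dep_symm ((dep_sIter_right k).mp hw))
            · exact hSep a haA b hbBC ((dep_sIter_right k).mp hw)
            · exact hSep Tm.zero h0A b hbBC ((dep_sIter_right k).mp hw))
          (by
            intro k
            right
            rintro (hw | hw | hw)
            · exact hIdx.1 t₀ htB c hcC ((dep_sIter_right k).mp hw)
            · exact hSep a haA c hcBC ((dep_sIter_right k).mp hw)
            · exact hSep Tm.zero h0A c hcBC ((dep_sIter_right k).mp hw))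
          (Or.inl ⟨n', 0, .refl _⟩)
        rcases hP with hw | hw | hw
        · exact hIdx.1 t₀ htB u₀ huC ((dep_sIter_right m').mp hw)
        · exact hSep a haA u₀ (Cset_subset_BCset huC) ((dep_sIter_right m').mp hw)
        · exact hSep Tm.zero h0A u₀ (Cset_subset_BCset huC) ((dep_sIter_right m').mp hw)
      · intro b₁ hb₁ b₂ hb₂ n' m' he
        obtain ⟨p, q, hpq⟩ := hb₁
        obtain ⟨p', q', hpq'⟩ := hb₂
        have htB1 : b₁ ∈ B1 (⟨insert (Fm.add2 a b c) Γ, Δ⟩ : Seq) := ⟨p, q, hpq⟩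
        have htB2 : b₂ ∈ B1 (⟨insert (Fm.add2 a b c) Γ, Δ⟩ : Seq) := ⟨p', q', hpq'⟩
        have hf1 := fresh3_B1S0 hfr b₁ htB1
        have hf2 := fresh3_B1S0 hfr b₂ htB2
        have h2 := caseAdd2_transfer_L hfr he
        rw [subst_sIter, subst_sIter] at h2
        have hid1 : b₁.subst (fun v => if v = y then b else .var v) = b₁ :=
          subst_id_of (fun v hv => by
            simp [show v ≠ y from fun h => hf1.2.1 (h ▸ hv)])
        have hid2 : b₂.subst (fun v => if v = y then b else .var v) = b₂ :=
          subst_id_of (fun v hv => by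
            simp [show v ≠ y from fun h => hf2.2.1 (h ▸ hv)])
        rw [hid1, hid2] at h2
        have hP := leftChain h2 (fun w =>
            EqvTm (antSet (⟨insert (Fm.add2 a b c) Γ, Δ⟩ : Seq)) (sIter n' b₁) w)
          (fun w w' hw he' => hw.trans he')
          (by
            intro k
            right
            intro hP
            exact hSep Tm.zero h0A b₁ (B1_subset_BCset htB1) (dep_symm ⟨n', k, hP⟩))
          (by
            intro k
            right
            intro hP
            exact hSep a haA b₁ (B1_subset_BCset htB1) (dep_symm ⟨n', k, hP⟩))
          (by
            intro k
            right
            intro hP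
            exact hbot p b₁ q hpq (dep_symm ⟨n', k, hP⟩))
          (by
            intro k
            right
            intro hP
            exact hIdx.1 b₁ htB1 c hcC ⟨n', k, hP⟩)
          (.refl _)
        exact hIdx.2 b₁ htB1 b₂ htB2 n' m' hP
    · -- right premise
      obtain rfl : n = 0 := by simp only [List.length] at hn; omega
      show IndexSequent (⟨insert (Fm.eq a (.s (.var x))) (insert (Fm.eq b (.var y))
        (insert (Fm.eq c (.var z)) (insert (Fm.add2 (.var x) (.s (.var y)) (.var z)) Γ))),
        Δ⟩ : Seq)
      constructor
      · intro t₀ ht₀ u₀ hu₀ hdep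
        obtain ⟨p, q, hpq⟩ := ht₀
        have htB : t₀ ∈ B1 (⟨insert (Fm.add2 a b c) Γ, Δ⟩ : Seq) := ⟨p, q, hpq⟩
        have hft := fresh3_B1S0 hfr t₀ htB
        obtain ⟨n', m', heqv⟩ := hdep
        have h2 := caseAdd2_transfer_R hxy hxz hyz hfr heqv
        rw [subst_sIter, subst_sIter] at h2
        have hid1 : t₀.subst (fun v => if v = y then b else if v = z then c else .var v) = t₀ :=
          subst_id_of (fun v hv => by
            simp [show v ≠ y from fun h => hft.2.1 (h ▸ hv),
              show v ≠ z from fun h => hft.2.2 (h ▸ hv)])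
        rw [hid1] at h2
        have hu₁ : ∃ u₁ ∈ Cset (⟨insert (Fm.add2 a b c) Γ, Δ⟩ : Seq),
            x ∉ (u₀.subst (fun v => if v = y then b else if v = z then c else .var v)).fv ∧
            ∀ α : Tm, DepTm (antSet (⟨insert (Fm.add2 a b c) Γ, Δ⟩ : Seq)) α
              (u₀.subst (fun v => if v = y then b else if v = z then c else .var v)) →
              DepTm (antSet (⟨insert (Fm.add2 a b c) Γ, Δ⟩ : Seq)) α u₁ := by
          rcases CsetR_cases hu₀ with rfl | huC
          · have hθ : (Tm.var z).subst
                (fun v => if v = y then b else if v = z then c else .var v) = c := by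
              simp [Tm.subst, Ne.symm hyz]
            rw [hθ]
            exact ⟨c, hcC, hfc.1, fun α h => h⟩
          · have hfu := fresh3_CsetS0 hfr u₀ huC
            have hθ : u₀.subst
                (fun v => if v = y then b else if v = z then c else .var v) = u₀ :=
              subst_id_of (fun v hv => by
                simp [show v ≠ y from fun h => hfu.2.1 (h ▸ hv),
                  show v ≠ z from fun h => hfu.2.2 (h ▸ hv)])
            rw [hθ]
            exact ⟨u₀, huC, hfu.1, fun α h => h⟩
        obtain ⟨u₁, hu₁C, hxu, htrans⟩ := hu₁
        have hchain := rightChain hES' hfa.1 h2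
          (Or.inl ⟨by rw [fv_sIter]; exact hft.1, Or.inl (.refl _)⟩)
        rcases hchain with ⟨hx1, hEv | hDv⟩ | ⟨j, hj⟩
        · exact hIdx.1 t₀ htB u₁ hu₁C (htrans t₀ ⟨n', m', hEv⟩)
        · exact hSep a haA u₁ (Cset_subset_BCset hu₁C)
            (htrans a ((dep_sIter_right m').mp hDv))
        · exact sIter_var_ne hxu m' j hj
      · intro b₁ hb₁ b₂ hb₂ n' m' he
        obtain ⟨p, q, hpq⟩ := hb₁
        obtain ⟨p', q', hpq'⟩ := hb₂
        have htB1 : b₁ ∈ B1 (⟨insert (Fm.add2 a b c) Γ, Δ⟩ : Seq) := ⟨p, q, hpq⟩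
        have htB2 : b₂ ∈ B1 (⟨insert (Fm.add2 a b c) Γ, Δ⟩ : Seq) := ⟨p', q', hpq'⟩
        have hf1 := fresh3_B1S0 hfr b₁ htB1
        have hf2 := fresh3_B1S0 hfr b₂ htB2
        have h2 := caseAdd2_transfer_R hxy hxz hyz hfr he
        rw [subst_sIter, subst_sIter] at h2
        have hid1 : b₁.subst (fun v => if v = y then b else if v = z then c else .var v) = b₁ :=
          subst_id_of (fun v hv => by
            simp [show v ≠ y from fun h => hf1.2.1 (h ▸ hv),
              show v ≠ z from fun h => hf1.2.2 (h ▸ hv)])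
        have hid2 : b₂.subst (fun v => if v = y then b else if v = z then c else .var v) = b₂ :=
          subst_id_of (fun v hv => by
            simp [show v ≠ y from fun h => hf2.2.1 (h ▸ hv),
              show v ≠ z from fun h => hf2.2.2 (h ▸ hv)])
        rw [hid1, hid2] at h2
        have hchain := rightChain hES' hfa.1 h2
          (Or.inl ⟨by rw [fv_sIter]; exact hf1.1, Or.inl (.refl _)⟩)
        rcases hchain with ⟨hx1, hEv | hDv⟩ | ⟨j, hj⟩
        · exact hIdx.2 b₁ htB1 b₂ htB2 n' m' hEv
        · exact absurd ((dep_sIter_right m').mp hDv)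
            (fun h => hSep a haA b₂ (B1_subset_BCset htB2) h)
        · exact absurd hj (sIter_var_ne hf2.1 m' j)

lemma eqv_goal {α β : Tm} (h : EqvTm (antSet goalSeq) α β) : α = β := by
  refine eqv_no_eq ?_ h
  intro t1 t2 h12
  simp [goalSeq, antSet] at h12

lemma GI_goal : Good0 goalSeq ∧ Sep goalSeq := by
  constructor
  · constructor
    · intro φ hφ
      simp only [goalSeq, Finset.mem_singleton] at hφ
      subst hφ
      exact Or.inr ⟨_, _, _, rfl⟩
    · intro φ hφ
      simp only [goalSeq, Finset.mem_singleton] at hφ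
      subst hφ
      exact ⟨_, _, _, rfl⟩
  · intro t ht u hu hdep
    obtain ⟨n, m, hd⟩ := hdep
    have heq := eqv_goal hd
    have hv := congrArg Tm.varOf heq
    rw [varOf_sIter, varOf_sIter] at hv
    have htv : t.varOf = some 0 ∨ t.varOf = none := by
      rcases ht with ⟨p, q, h⟩ | ⟨p, q, h⟩ | rfl
      · simp only [goalSeq, Finset.mem_singleton] at h
        obtain ⟨h1, _, _⟩ : t = Tm.var 0 ∧ p = Tm.var 1 ∧ q = Tm.var 2 := by simpa using h
        left; rw [h1]; rfl
      · simp only [goalSeq, Finset.mem_singleton] at h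
        obtain ⟨h1, _, _⟩ : t = Tm.var 0 ∧ p = Tm.var 1 ∧ q = Tm.var 2 := by simpa using h
        left; rw [h1]; rfl
      · right; rfl
    have huv : u.varOf = some 1 ∨ u.varOf = some 2 := by
      rcases hu with ⟨p, q, h⟩ | ⟨p, q, h⟩ | ⟨p, q, h⟩ | ⟨p, q, h⟩ <;>
        simp only [goalSeq, Finset.mem_singleton] at h
      · obtain ⟨_, h2, _⟩ : p = Tm.var 0 ∧ u = Tm.var 1 ∧ q = Tm.var 2 := by simpa using h
        left; rw [h2]; rfl
      · obtain ⟨_, _, h3⟩ : p = Tm.var 0 ∧ q = Tm.var 1 ∧ u = Tm.var 2 := by simpa using h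
        right; rw [h3]; rfl
      · obtain ⟨_, h2, _⟩ : p = Tm.var 0 ∧ u = Tm.var 1 ∧ q = Tm.var 2 := by simpa using h
        left; rw [h2]; rfl
      · obtain ⟨_, _, h3⟩ : p = Tm.var 0 ∧ q = Tm.var 1 ∧ u = Tm.var 2 := by simpa using h
        right; rw [h3]; rfl
    rcases htv with h1 | h1 <;> rcases huv with h2 | h2 <;> rw [h1, h2] at hv <;> simp at hv

lemma D_nobud_strict_prefix (P : PreProof) {σ τ : List ℕ} (h : P.D.label σ ≠ none)
    (hpre : τ <+: σ) (hne : τ ≠ σ) : ¬ budAt P.D.label τ := by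
  rintro ⟨S, hS⟩
  obtain ⟨ρ, rfl⟩ := hpre
  cases ρ with
  | nil => exact hne (by simp)
  | cons i ρ' =>
    rcases P.D.wf τ S _ hS with ⟨_, hnone⟩ | ⟨hne', _⟩
    · apply h
      by_contra hc
      have h2 := P.D.prefix_closed (τ ++ [i]) ρ' (by simpa [List.append_assoc] using hc)
      exact h2 (hnone i)
    · exact hne' rfl

lemma anchor (P : PreProof) (hcn : P.CycleNormal) (T : Lbl) (hT : IsUnfolding P T) :
    ∀ σ : List ℕ, T σ ≠ none → ∃ δ S r, P.D.label δ = some (S, r) ∧ r ≠ Rule.bud ∧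
      ∀ τ, T (σ ++ τ) = T (δ ++ τ) := by
  obtain ⟨h1, h2, h3⟩ := hT
  have H : ∀ N (σ : List ℕ), σ.length < N → T σ ≠ none →
      ∃ δ S r, P.D.label δ = some (S, r) ∧ r ≠ Rule.bud ∧
        ∀ τ, T (σ ++ τ) = T (δ ++ τ) := by
    intro N
    induction N with
    | zero => intro σ hlen; omega
    | succ N ih =>
      intro σ hlen hne
      by_cases hD : P.D.label σ = none
      · by_cases hb : ∃ σ₁, σ₁ <+: σ ∧ budAt P.D.label σ₁
        · obtain ⟨σ₁, hp, hbud⟩ := hb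
          obtain ⟨ρ, rfl⟩ := hp
          have key : ∀ τ, T ((σ₁ ++ ρ) ++ τ) = T ((P.C σ₁ ++ ρ) ++ τ) := by
            intro τ
            rw [List.append_assoc, List.append_assoc]
            exact h2 σ₁ (ρ ++ τ) hbud
          obtain ⟨S₁, hS₁⟩ := hbud
          obtain ⟨r', hr'1, hr'2⟩ := P.comp σ₁ S₁ hS₁
          have hlt : (P.C σ₁).length < σ₁.length := by
            have hpre := hcn σ₁ S₁ hS₁
            have hle := hpre.length_le
            rcases Nat.lt_or_ge (P.C σ₁).length σ₁.length with h' | h'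
            · exact h'
            · exfalso
              have heq : P.C σ₁ = σ₁ := hpre.eq_of_length (le_antisymm hle h')
              rw [heq, hS₁] at hr'1
              simp only [Option.some.injEq, Prod.mk.injEq] at hr'1
              cases hr'1.2
              exact hr'2 rfl
          have hlen2 : (P.C σ₁ ++ ρ).length < N := by
            simp only [List.length_append] at hlen ⊢
            omega
          have hne2 : T (P.C σ₁ ++ ρ) ≠ none := by
            have := key []
            simp only [List.append_nil] at this
            rwa [this] at hne
          obtain ⟨δ, S', r'', hδ, hrb, hagree⟩ := ih (P.C σ₁ ++ ρ) hlen2 hne2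
          exact ⟨δ, S', r'', hδ, hrb, fun τ => (key τ).trans (hagree τ)⟩
        · push_neg at hb
          exact absurd (h3 σ hD (fun σ₁ hp => hb σ₁ hp)) hne
      · obtain ⟨⟨S, r⟩, hS⟩ := Option.ne_none_iff_exists'.mp hD
        by_cases hr : r = Rule.bud
        · subst hr
          have hbud : budAt P.D.label σ := ⟨S, hS⟩
          obtain ⟨r', hr'1, hr'2⟩ := P.comp σ S hS
          have hlt : (P.C σ).length < σ.length := by
            have hpre := hcn σ S hS
            have hle := hpre.length_le
            rcases Nat.lt_or_ge (P.C σ).length σ.length with h' | h'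
            · exact h'
            · exfalso
              have heq : P.C σ = σ := hpre.eq_of_length (le_antisymm hle h')
              rw [heq, hS] at hr'1
              simp only [Option.some.injEq, Prod.mk.injEq] at hr'1
              cases hr'1.2
              exact hr'2 rfl
          have hTC : T (P.C σ) = P.D.label (P.C σ) := by
            refine h1 (P.C σ) (by rw [hr'1]; simp) ?_
            rintro ⟨S', hS'⟩
            rw [hr'1] at hS'
            simp only [Option.some.injEq, Prod.mk.injEq] at hS'
            cases hS'.2
            exact hr'2 rfl
          have hne2 : T (P.C σ) ≠ none := by
            rw [hTC, hr'1]; simp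
          obtain ⟨δ, S', r'', hδ, hrb, hagree⟩ := ih (P.C σ) (by omega) hne2
          exact ⟨δ, S', r'', hδ, hrb, fun τ => (h2 σ τ hbud).trans (hagree τ)⟩
        · exact ⟨σ, S, r, hS, hr, fun τ => rfl⟩
  intro σ hne
  exact H (σ.length + 1) σ (by omega) hne

lemma node_structure (P : PreProof) (hcn : P.CycleNormal) (T : Lbl)
    (hT : IsUnfolding P T) {σ : List ℕ} {S : Seq} {r : Rule}
    (hσ : T σ = some (S, r)) :
    ∃ δ, P.D.label δ = some (S, r) ∧ r ≠ Rule.bud ∧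
      ∃ prems, Inf r S prems ∧
        ∀ n, T (σ ++ [n]) ≠ none →
          ∃ (hn : n < prems.length) (r' : Rule),
            T (σ ++ [n]) = some (prems.get ⟨n, hn⟩, r') := by
  obtain ⟨δ, S₀, r₀, hδ, hr₀, hagree⟩ := anchor P hcn T hT σ (by rw [hσ]; simp)
  have hTδ : T δ = P.D.label δ := by
    refine hT.1 δ (by rw [hδ]; simp) ?_
    rintro ⟨S', hS'⟩
    rw [hδ] at hS'
    simp only [Option.some.injEq, Prod.mk.injEq] at hS'
    cases hS'.2
    exact hr₀ rfl
  have hTσδ : T σ = T δ := by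
    have := hagree []
    simpa using this
  have hSr : S₀ = S ∧ r₀ = r := by
    rw [hTσδ, hTδ, hδ] at hσ
    simp only [Option.some.injEq, Prod.mk.injEq] at hσ
    exact ⟨hσ.1, hσ.2⟩
  obtain ⟨rfl, rfl⟩ := hSr
  rcases P.D.wf δ S₀ r₀ hδ with ⟨hb, _⟩ | ⟨_, prems, hInf, hck⟩
  · exact absurd hb hr₀
  refine ⟨δ, hδ, hr₀, prems, hInf, ?_⟩
  intro n hne
  have hTn : T (σ ++ [n]) = T (δ ++ [n]) := hagree [n]
  by_cases hlt : n < prems.length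
  · obtain ⟨r', hc⟩ := hck.1 ⟨n, hlt⟩
    by_cases hbud' : r' = Rule.bud
    · subst hbud'
      have hbud : budAt P.D.label (δ ++ [n]) := ⟨_, hc⟩
      obtain ⟨r'', h1'', h2''⟩ := P.comp (δ ++ [n]) _ hc
      have hTC : T (P.C (δ ++ [n])) = P.D.label (P.C (δ ++ [n])) := by
        refine hT.1 _ (by rw [h1'']; simp) ?_
        rintro ⟨S', hS'⟩
        rw [h1''] at hS'
        simp only [Option.some.injEq, Prod.mk.injEq] at hS'
        cases hS'.2
        exact h2'' rfl
      have hstep : T (δ ++ [n]) = T (P.C (δ ++ [n])) := by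
        have := hT.2.1 (δ ++ [n]) [] hbud
        simpa using this
      refine ⟨hlt, r'', ?_⟩
      rw [hTn, hstep, hTC, h1'']
    · have hTc : T (δ ++ [n]) = P.D.label (δ ++ [n]) := by
        refine hT.1 _ (by rw [hc]; simp) ?_
        rintro ⟨S', hS'⟩
        rw [hc] at hS'
        simp only [Option.some.injEq, Prod.mk.injEq] at hS'
        cases hS'.2
        exact hbud' rfl
      exact ⟨hlt, r', by rw [hTn, hTc, hc]⟩
  · exfalso
    have hnone : P.D.label (δ ++ [n]) = none := hck.2 n (le_of_not_gt hlt)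
    have hTnone : T (δ ++ [n]) = none := by
      refine hT.2.2 _ hnone ?_
      intro σ₁ hp hbud
      by_cases heq : σ₁ = δ ++ [n]
      · subst heq
        obtain ⟨S', hS'⟩ := hbud
        rw [hnone] at hS'
        cases hS'
      · have hpδ : σ₁ <+: δ := by
          have hlen : σ₁.length ≤ δ.length := by
            have h5 := hp.length_le
            simp only [List.length_append, List.length_cons, List.length_nil] at h5
            rcases Nat.lt_or_ge σ₁.length (δ.length + 1) with h6 | h6
            · omega
            · exfalso
              apply heq
              apply hp.eq_of_length
              simp only [List.length_append, List.length_cons, List.length_nil]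
              omega
          exact List.prefix_of_prefix_length_le hp (by simp) hlen
        rcases eq_or_ne σ₁ δ with rfl | hne'
        · obtain ⟨S', hS'⟩ := hbud
          rw [hδ] at hS'
          simp only [Option.some.injEq, Prod.mk.injEq] at hS'
          cases hS'.2
          exact hr₀ rfl
        · exact D_nobud_strict_prefix P (by rw [hδ]; simp) hpδ hne' hbud
    rw [hTn] at hne
    exact hne hTnone

lemma global_GI (P : PreProof) (hP : IsCNProofOfGoal P) :
    ∀ σ S r, P.D.label σ = some (S, r) → Good0 S ∧ Sep S := by
  intro σ
  induction σ using List.reverseRecOn with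
  | nil =>
    intro S r h
    obtain ⟨r₀, h₀⟩ := hP.2.2.2.2
    rw [h₀] at h
    simp only [Option.some.injEq, Prod.mk.injEq] at h
    rw [← h.1]
    exact GI_goal
  | append_singleton τ n ih =>
    intro S r h
    have hτ : P.D.label τ ≠ none := by
      refine P.D.prefix_closed τ [n] ?_
      rw [h]; simp
    obtain ⟨⟨S₀, r₀⟩, h₀⟩ := Option.ne_none_iff_exists'.mp hτ
    rcases P.D.wf τ S₀ r₀ h₀ with ⟨_, hnone⟩ | ⟨_, prems, hInf, hck⟩
    · exact absurd h (by rw [hnone n]; simp)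
    by_cases hlt : n < prems.length
    · obtain ⟨r', hc⟩ := hck.1 ⟨n, hlt⟩
      have hSc : S = prems.get ⟨n, hlt⟩ := by
        rw [h] at hc
        simp only [Option.some.injEq, Prod.mk.injEq] at hc
        exact hc.1
      obtain ⟨hG, hSep⟩ := ih S₀ r₀ h₀
      have hcut : ∀ φ, r₀ ≠ .cut φ := fun φ hφ => hP.2.1 ⟨τ, S₀, r₀, h₀, φ, hφ⟩
      have heqL : ∀ v1 v2 t' u', r₀ ≠ .eqL v1 v2 t' u' := fun v1 v2 t' u' hφ =>
        hP.2.2.1 ⟨τ, S₀, r₀, h₀, v1, v2, t', u', hφ⟩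
      rw [hSc]
      exact step_GI hInf hG hSep hcut heqL _ (List.get_mem prems ⟨n, hlt⟩)
    · exact absurd h (by rw [hck.2 n (le_of_not_gt hlt)]; simp)

/-- Every sequent occurring in an index path of the
    tree-unfolding of a cut-free cycle-normal `CLKID^ω_a` proof of
    `Add2(x,y,z) ⊢ Add1(x,y,z)` is an index sequent. -/
theorem index_path_index_sequents (P : PreProof) (hP : IsCNProofOfGoal P)
    (T : Lbl) (hT : IsUnfolding P T) :
    ∀ (p : ℕ → List ℕ) (N : ℕ), IsIndexPathUpTo T p N →
      ∀ i, i ≤ N → IndexSequentAt T (p i) := by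
  intro p N hpath i
  induction i with
  | zero => intro _; exact hpath.2.2.1
  | succ i ih =>
    intro hle
    have hiN : i < N := by omega
    obtain ⟨S, rS, hTi, hIdx⟩ := ih (by omega)
    obtain ⟨δ, hδ, hrb, prems, hInf, hchild⟩ := node_structure P hP.2.2.2.1 T hT hTi
    obtain ⟨n, hn⟩ := hpath.2.1 i hiN
    have hTn : T (p (i + 1)) ≠ none := hpath.1 (i + 1) hle
    rw [hn] at hTn
    obtain ⟨hlt, r', hchild'⟩ := hchild n hTn
    obtain ⟨hG, hSep⟩ := global_GI P hP δ S rS hδ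
    have hcut : ∀ φ, rS ≠ .cut φ := fun φ hφ => hP.2.1 ⟨δ, S, rS, hδ, φ, hφ⟩
    have heqL : ∀ v1 v2 t' u', rS ≠ .eqL v1 v2 t' u' := fun v1 v2 t' u' hφ =>
      hP.2.2.1 ⟨δ, S, rS, hδ, v1, v2, t', u', hφ⟩
    have hsw : n = 0 → ∀ a b c x y z, rS = .caseAdd2 a b c x y z → IndexBot S b := by
      intro h0 a b c x y z hr
      have hca : CaseAdd2At T (p i) := ⟨S, a, b, c, x, y, z, by rw [hTi, hr]⟩
      have hswp := hpath.2.2.2 i hiN hca (by rw [hn, h0])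
      obtain ⟨S₂, a₂, b₂, c₂, x₂, y₂, z₂, hT₂, hbot⟩ := hswp
      rw [hTi, hr] at hT₂
      simp only [Option.some.injEq, Prod.mk.injEq, Rule.caseAdd2.injEq] at hT₂
      rw [hT₂.1, hT₂.2.2.1]
      exact hbot
    have hstep := step_Index hInf hG hSep hIdx hcut heqL hlt hsw
    exact ⟨prems.get ⟨n, hlt⟩, r', by rw [hn]; exact hchild', hstep⟩

end CLKID
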